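/- arXiv:1706.10079 — 6 statements merged into one kernel-verified Lean document; each statement's English description precedes it below -/
import Mathlib

section
/- Let K be a perfect field with algebraic closure K̄, let n ≥ 1 and set m = binomial(2n+1, n) − 1. Then there exists an injective group homomorphism ι : PGL_{n+1}(K̄) → GL_{m+1}(K̄) that is equivariant for the Galois actions: for every field automorphism σ of K̄ fixing K pointwise and every g ∈ PGL_{n+1}(K̄), one has ι(σ • g) = σ • ι(g), where σ acts on PGL_{n+1}(K̄) and on GL_{m+1}(K̄) by applying σ to each matrix entry. -/
open Matrix

/-- The entrywise action of a ring automorphism on the general linear group. -/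
def galGL {R : Type*} [CommRing R] (N : ℕ) (σ : R ≃+* R) :
    GL (Fin N) R →* GL (Fin N) R :=
  Units.map (σ.toRingHom.mapMatrix).toMonoidHom

namespace Stmt0Aux

variable {F : Type*} [CommRing F] {n : ℕ}

abbrev BIdx (n : ℕ) := {p : Fin (n+1) × Fin (n+1) // p.1 ≠ p.2} ⊕ Fin n

def bE : BIdx n → Matrix (Fin (n+1)) (Fin (n+1)) F
  | .inl p => Matrix.single p.1.1 p.1.2 1
  | .inr k => Matrix.single 0 0 1 - Matrix.single k.succ k.succ 1

def coordFn (X : Matrix (Fin (n+1)) (Fin (n+1)) F) : BIdx n → F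
  | .inl p => X p.1.1 p.1.2
  | .inr k => - X k.succ k.succ

lemma stdBM_apply (i j a b : Fin (n+1)) (c : F) :
    Matrix.single i j c a b = if i = a ∧ j = b then c else 0 := rfl

lemma coordFn_add (X Y : Matrix (Fin (n+1)) (Fin (n+1)) F) (a : BIdx n) :
    coordFn (X + Y) a = coordFn X a + coordFn Y a := by
  cases a <;> simp [coordFn]; ring

lemma coordFn_smul (t : F) (X : Matrix (Fin (n+1)) (Fin (n+1)) F) (a : BIdx n) :
    coordFn (t • X) a = t * coordFn X a := by
  cases a <;> simp [coordFn]

def coordL (a : BIdx n) : Matrix (Fin (n+1)) (Fin (n+1)) F →ₗ[F] F where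
  toFun X := coordFn X a
  map_add' X Y := coordFn_add X Y a
  map_smul' t X := coordFn_smul t X a

lemma trace_bE (c : BIdx n) : (bE (F := F) c).trace = 0 := by
  cases c with
  | inl p => exact Matrix.trace_single_eq_of_ne _ _ _ p.2
  | inr k => simp [bE]

lemma coordFn_bE (a b : BIdx n) :
    coordFn (bE (F := F) b) a = if a = b then 1 else 0 := by
  rcases a with ⟨⟨i,j⟩,hij⟩ | k <;> rcases b with ⟨⟨i',j'⟩,h'⟩ | k'
  · have : (Sum.inl ⟨(i,j),hij⟩ = (Sum.inl ⟨(i',j'),h'⟩ : BIdx n)) ↔ (i' = i ∧ j' = j) := by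
      constructor
      · rintro h; injection h with h; rw [Subtype.ext_iff] at h
        exact ⟨congrArg Prod.fst h.symm, congrArg Prod.snd h.symm⟩
      · rintro ⟨rfl, rfl⟩; rfl
    simp [coordFn, bE, stdBM_apply, this]
  · have h1 : ¬((0:Fin (n+1)) = i ∧ (0:Fin (n+1)) = j) := by
      rintro ⟨rfl, h2⟩; exact hij h2
    have h2 : ¬(k'.succ = i ∧ k'.succ = j) := by
      rintro ⟨rfl, h2⟩; exact hij h2
    simp [coordFn, bE, stdBM_apply, h1, h2]
  · have h2 : ¬(i' = k.succ ∧ j' = k.succ) := by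
      rintro ⟨rfl, h2⟩; exact h' h2.symm
    simp [coordFn, bE, stdBM_apply, h2]
  · have h1 : ¬((0:Fin (n+1)) = k.succ ∧ (0:Fin (n+1)) = k.succ) := by
      rintro ⟨h, -⟩; exact (Fin.succ_ne_zero k) h.symm
    have : (Sum.inr k = (Sum.inr k' : BIdx n)) ↔ (k'.succ = k.succ ∧ k'.succ = k.succ) := by
      simp [Fin.succ_inj, eq_comm, and_self]
    simp only [coordFn, bE, Matrix.sub_apply, stdBM_apply, if_neg h1, this]
    by_cases h : k'.succ = k.succ ∧ k'.succ = k.succ <;> simp [h]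

lemma sum_offdiag (X : Matrix (Fin (n+1)) (Fin (n+1)) F) :
    ∑ p : {p : Fin (n+1) × Fin (n+1) // p.1 ≠ p.2},
      X p.1.1 p.1.2 • Matrix.single p.1.1 p.1.2 (1:F)
      = X - Matrix.diagonal (fun i => X i i) := by
  ext a b
  simp only [Matrix.sum_apply, Matrix.smul_apply, stdBM_apply, smul_eq_mul, Matrix.sub_apply]
  by_cases hab : a = b
  · subst hab
    rw [Finset.sum_eq_zero, diagonal_apply_eq]
    · ring
    · rintro ⟨⟨i,j⟩, hij⟩ -
      have : ¬(i = a ∧ j = a) := by rintro ⟨rfl, rfl⟩; exact hij rfl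
      simp [this]
  · rw [Finset.sum_eq_single (⟨(a,b), hab⟩ : {p : Fin (n+1) × Fin (n+1) // p.1 ≠ p.2})]
    · simp [diagonal_apply_ne _ hab]
    · rintro ⟨⟨i,j⟩, hij⟩ - hne
      have : ¬(i = a ∧ j = b) := by
        rintro ⟨rfl, rfl⟩; exact hne rfl
      simp [this]
    · intro h; exact absurd (Finset.mem_univ _) h

lemma sum_diag (X : Matrix (Fin (n+1)) (Fin (n+1)) F) (hX : X.trace = 0) :
    ∑ k : Fin n, (- X k.succ k.succ) • (Matrix.single 0 0 1 - Matrix.single k.succ k.succ (1:F))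
      = Matrix.diagonal (fun i => X i i) := by
  have htr : X 0 0 + ∑ k : Fin n, X k.succ k.succ = 0 := by
    simpa [Matrix.trace, Matrix.diag, Fin.sum_univ_succ] using hX
  ext a b
  simp only [Matrix.sum_apply, Matrix.smul_apply, Matrix.sub_apply, stdBM_apply, smul_eq_mul]
  by_cases hab : a = b
  · subst hab
    by_cases ha : a = 0
    · subst ha
      have hterm : ∀ k : Fin n, -X k.succ k.succ *
          ((if ((0:Fin (n+1)) = 0 ∧ (0:Fin (n+1)) = 0) then (1:F) else 0)
            - (if (k.succ = (0:Fin (n+1)) ∧ k.succ = (0:Fin (n+1))) then (1:F) else 0))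
          = -X k.succ k.succ := by
        intro k
        have h2 : ¬(k.succ = (0:Fin (n+1)) ∧ k.succ = (0:Fin (n+1))) := by
          rintro ⟨h, -⟩; exact Fin.succ_ne_zero k h
        rw [if_pos ⟨rfl, rfl⟩, if_neg h2]; ring
      rw [Finset.sum_congr rfl (fun k _ => hterm k), diagonal_apply_eq,
        Finset.sum_neg_distrib]
      linear_combination -htr
    · obtain ⟨j, rfl⟩ : ∃ j : Fin n, a = j.succ :=
        ⟨a.pred ha, (Fin.succ_pred a ha).symm⟩
      have h1 : ¬((0:Fin (n+1)) = j.succ ∧ (0:Fin (n+1)) = j.succ) := by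
        rintro ⟨h, -⟩; exact Fin.succ_ne_zero j h.symm
      rw [diagonal_apply_eq, Finset.sum_eq_single j]
      · rw [if_neg h1, if_pos ⟨rfl, rfl⟩]; ring
      · intro k _ hk
        have h2 : ¬(k.succ = j.succ ∧ k.succ = j.succ) := by
          rintro ⟨h, -⟩; exact hk (Fin.succ_inj.mp h)
        rw [if_neg h1, if_neg h2]; ring
      · intro h; exact absurd (Finset.mem_univ _) h
  · rw [diagonal_apply_ne _ hab, Finset.sum_eq_zero]
    intro k _
    have h1 : ¬((0:Fin (n+1)) = a ∧ (0:Fin (n+1)) = b) := by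
      rintro ⟨rfl, rfl⟩; exact hab rfl
    have h2 : ¬(k.succ = a ∧ k.succ = b) := by
      rintro ⟨rfl, rfl⟩; exact hab rfl
    rw [if_neg h1, if_neg h2]; ring

lemma expand (X : Matrix (Fin (n+1)) (Fin (n+1)) F) (hX : X.trace = 0) :
    ∑ c : BIdx n, coordFn X c • bE c = X := by
  rw [Fintype.sum_sum_type]
  show (∑ p : {p : Fin (n+1) × Fin (n+1) // p.1 ≠ p.2},
      X p.1.1 p.1.2 • Matrix.single p.1.1 p.1.2 (1:F)) +
    (∑ k : Fin n, (- X k.succ k.succ) • (Matrix.single 0 0 1 - Matrix.single k.succ k.succ (1:F))) = X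
  rw [sum_offdiag, sum_diag X hX, sub_add_cancel]

/-- Entries of the conjugation representation. -/
def Amat (g : GL (Fin (n+1)) F) : Matrix (BIdx n) (BIdx n) F :=
  fun a b => coordFn ((g : Matrix (Fin (n+1)) (Fin (n+1)) F) * bE b * ((g⁻¹ : GL (Fin (n+1)) F) : Matrix (Fin (n+1)) (Fin (n+1)) F)) a

lemma trace_conj (g : GL (Fin (n+1)) F) (X : Matrix (Fin (n+1)) (Fin (n+1)) F) :
    ((g : Matrix (Fin (n+1)) (Fin (n+1)) F) * X * ((g⁻¹ : GL (Fin (n+1)) F) : Matrix (Fin (n+1)) (Fin (n+1)) F)).trace = X.trace := by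
  rw [Matrix.trace_mul_cycle]
  have : ((g⁻¹ : GL (Fin (n+1)) F) : Matrix (Fin (n+1)) (Fin (n+1)) F) * (g : Matrix (Fin (n+1)) (Fin (n+1)) F) = 1 := by
    rw [← Units.val_mul, inv_mul_cancel, Units.val_one]
  rw [this, Matrix.one_mul]

lemma Amat_one : Amat (1 : GL (Fin (n+1)) F) = 1 := by
  ext a b
  simp only [Amat, inv_one, Units.val_one, Matrix.one_mul, Matrix.mul_one]
  rw [coordFn_bE]
  simp [Matrix.one_apply]

lemma conj_eq_sum (g : GL (Fin (n+1)) F) (b : BIdx n) :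
    (g : Matrix (Fin (n+1)) (Fin (n+1)) F) * bE b * ((g⁻¹ : GL (Fin (n+1)) F) : Matrix (Fin (n+1)) (Fin (n+1)) F)
      = ∑ c : BIdx n, Amat g c b • bE c := by
  rw [eq_comm]
  exact expand _ (by rw [trace_conj]; exact trace_bE b)

lemma Amat_mul (g h : GL (Fin (n+1)) F) : Amat (g * h) = Amat g * Amat h := by
  ext a b
  have key : (↑(g*h) : Matrix (Fin (n+1)) (Fin (n+1)) F) * bE b * (↑((g*h)⁻¹) : Matrix (Fin (n+1)) (Fin (n+1)) F)
      = ∑ c : BIdx n, Amat h c b • ((g : Matrix (Fin (n+1)) (Fin (n+1)) F) * bE c * ((g⁻¹ : GL (Fin (n+1)) F) : Matrix (Fin (n+1)) (Fin (n+1)) F)) := by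
    rw [_root_.mul_inv_rev, Units.val_mul, Units.val_mul]
    calc (g : Matrix (Fin (n+1)) (Fin (n+1)) F) * (h : Matrix (Fin (n+1)) (Fin (n+1)) F) * bE b *
          (((h⁻¹ : GL (Fin (n+1)) F) : Matrix (Fin (n+1)) (Fin (n+1)) F) * ((g⁻¹ : GL (Fin (n+1)) F) : Matrix (Fin (n+1)) (Fin (n+1)) F))
        = (g : Matrix (Fin (n+1)) (Fin (n+1)) F) *
            ((h : Matrix (Fin (n+1)) (Fin (n+1)) F) * bE b * ((h⁻¹ : GL (Fin (n+1)) F) : Matrix (Fin (n+1)) (Fin (n+1)) F)) *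
            ((g⁻¹ : GL (Fin (n+1)) F) : Matrix (Fin (n+1)) (Fin (n+1)) F) := by
          noncomm_ring
      _ = _ := by
          rw [conj_eq_sum h b, Finset.mul_sum, Finset.sum_mul]
          congr 1; ext c
          rw [Matrix.mul_smul, Matrix.smul_mul]
  show coordFn _ a = _
  rw [key]
  have : coordFn (∑ c : BIdx n, Amat h c b • ((g : Matrix (Fin (n+1)) (Fin (n+1)) F) * bE c * ((g⁻¹ : GL (Fin (n+1)) F) : Matrix (Fin (n+1)) (Fin (n+1)) F))) a
      = ∑ c : BIdx n, Amat h c b * Amat g a c := by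
    show coordL a _ = _
    rw [map_sum]
    congr 1; ext c
    rw [LinearMap.map_smul]
    simp [coordL, Amat, smul_eq_mul]
  rw [this, Matrix.mul_apply]
  congr 1; ext c; ring

/-- The conjugation representation as a homomorphism to units. -/
def rho : GL (Fin (n+1)) F →* (Matrix (BIdx n) (BIdx n) F)ˣ where
  toFun g := ⟨Amat g, Amat g⁻¹,
    by rw [← Amat_mul, mul_inv_cancel, Amat_one],
    by rw [← Amat_mul, inv_mul_cancel, Amat_one]⟩
  map_one' := Units.ext Amat_one
  map_mul' g h := Units.ext (Amat_mul g h)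

lemma scalar_of_commute_offdiag {g : Matrix (Fin (n+1)) (Fin (n+1)) F}
    (hg : ∀ i j : Fin (n+1), i ≠ j → Matrix.single i j (1:F) * g = g * Matrix.single i j 1) :
    ∃ c : F, g = Matrix.scalar (Fin (n+1)) c := by
  obtain ⟨c, hc⟩ := mem_range_scalar_of_commute_single
    (M := g) (fun i j hij => hg i j hij)
  exact ⟨c, hc.symm⟩

lemma Amat_eq_one_iff (g : GL (Fin (n+1)) F) :
    Amat g = 1 ↔ ∃ c : F, (g : Matrix (Fin (n+1)) (Fin (n+1)) F) = Matrix.scalar (Fin (n+1)) c := by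
  constructor
  · intro hA
    have hconj : ∀ b : BIdx n,
        (g : Matrix (Fin (n+1)) (Fin (n+1)) F) * bE b * ((g⁻¹ : GL (Fin (n+1)) F) : Matrix (Fin (n+1)) (Fin (n+1)) F) = bE b := by
      intro b
      rw [conj_eq_sum g b, hA]
      rw [Finset.sum_eq_single b]
      · simp [Matrix.one_apply]
      · intro c _ hc; simp [Matrix.one_apply, hc]
      · intro h; exact absurd (Finset.mem_univ _) h
    have hcomm : ∀ b : BIdx n, (g : Matrix (Fin (n+1)) (Fin (n+1)) F) * bE b = bE b * (g : Matrix (Fin (n+1)) (Fin (n+1)) F) := by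
      intro b
      have := congrArg (fun M => M * (g : Matrix (Fin (n+1)) (Fin (n+1)) F)) (hconj b)
      rw [Matrix.mul_assoc, Matrix.mul_assoc] at this
      rw [← this]
      have h1 : ((g⁻¹ : GL (Fin (n+1)) F) : Matrix (Fin (n+1)) (Fin (n+1)) F) * (g : Matrix (Fin (n+1)) (Fin (n+1)) F) = 1 := by
        rw [← Units.val_mul, inv_mul_cancel, Units.val_one]
      rw [h1, Matrix.mul_one]
    apply scalar_of_commute_offdiag
    intro i j hij
    exact (hcomm (Sum.inl ⟨(i,j), hij⟩)).symm
  · rintro ⟨c, hc⟩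
    ext a b
    show coordFn _ a = _
    have hcomm : (g : Matrix (Fin (n+1)) (Fin (n+1)) F) * bE b = bE b * (g : Matrix (Fin (n+1)) (Fin (n+1)) F) := by
      rw [hc]
      exact (Matrix.scalar_commute c (fun r => Commute.all c r) (bE b)).eq
    rw [hcomm, Matrix.mul_assoc]
    have h1 : (g : Matrix (Fin (n+1)) (Fin (n+1)) F) * ((g⁻¹ : GL (Fin (n+1)) F) : Matrix (Fin (n+1)) (Fin (n+1)) F) = 1 := by
      rw [← Units.val_mul, mul_inv_cancel, Units.val_one]
    rw [h1, Matrix.mul_one, coordFn_bE]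
    simp [Matrix.one_apply]

lemma stdBasis_unit (i j : Fin (n+1)) (hij : i ≠ j) :
    ∃ u : GL (Fin (n+1)) F, (u : Matrix (Fin (n+1)) (Fin (n+1)) F) = 1 + Matrix.single i j 1 := by
  have hsq : Matrix.single i j (1:F) * Matrix.single i j 1 = 0 :=
    Matrix.single_mul_single_of_ne 1 i j i (Ne.symm hij) 1
  refine ⟨⟨1 + Matrix.single i j 1, 1 - Matrix.single i j 1, ?_, ?_⟩, rfl⟩
  · rw [Matrix.mul_sub, Matrix.add_mul, Matrix.add_mul]
    simp [hsq]
  · rw [Matrix.sub_mul, Matrix.mul_add, Matrix.mul_add]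
    simp [hsq]

lemma mem_center_iff_scalar (g : GL (Fin (n+1)) F) :
    g ∈ Subgroup.center (GL (Fin (n+1)) F) ↔
      ∃ c : F, (g : Matrix (Fin (n+1)) (Fin (n+1)) F) = Matrix.scalar (Fin (n+1)) c := by
  rw [Subgroup.mem_center_iff]
  constructor
  · intro hZ
    apply scalar_of_commute_offdiag
    intro i j hij
    obtain ⟨u, hu⟩ := stdBasis_unit (F := F) i j hij
    have := congrArg (Units.val) (hZ u)
    rw [Units.val_mul, Units.val_mul, hu] at this
    rw [Matrix.add_mul, Matrix.mul_add, Matrix.one_mul, Matrix.mul_one] at this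
    exact add_left_cancel this
  · rintro ⟨c, hc⟩ h
    apply Units.ext
    rw [Units.val_mul, Units.val_mul, hc]
    exact (Matrix.scalar_commute c (fun r => Commute.all c r) _).symm.eq

lemma bE_map (φ : F →+* F) (c : BIdx n) : (bE (F := F) c).map φ = bE c := by
  cases c <;> ext a b <;>
    simp [bE, stdBM_apply, Matrix.map_apply, apply_ite φ, _root_.map_one, _root_.map_zero, map_sub]

lemma coordFn_map (φ : F →+* F) (X : Matrix (Fin (n+1)) (Fin (n+1)) F) (a : BIdx n) :
    coordFn (X.map φ) a = φ (coordFn X a) := by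
  cases a <;> simp [coordFn, Matrix.map_apply]

lemma galGL_val (σ : F ≃+* F) (g : GL (Fin (n+1)) F) :
    ((galGL (n+1) σ g : GL (Fin (n+1)) F) : Matrix (Fin (n+1)) (Fin (n+1)) F)
      = (g : Matrix (Fin (n+1)) (Fin (n+1)) F).map σ.toRingHom := rfl

lemma Amat_gal (σ : F ≃+* F) (g : GL (Fin (n+1)) F) :
    Amat (galGL (n+1) σ g) = (Amat g).map σ.toRingHom := by
  ext a b
  have hinv : (((galGL (n+1) σ g)⁻¹ : GL (Fin (n+1)) F) : Matrix (Fin (n+1)) (Fin (n+1)) F)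
      = ((g⁻¹ : GL (Fin (n+1)) F) : Matrix (Fin (n+1)) (Fin (n+1)) F).map σ.toRingHom := by
    rw [← map_inv (galGL (n+1) σ)]; rfl
  show coordFn _ a = _
  rw [galGL_val, hinv]
  conv_lhs => rw [show bE b = (bE (F := F) b).map σ.toRingHom from (bE_map _ b).symm]
  rw [← Matrix.map_mul, ← Matrix.map_mul, coordFn_map]
  rfl

section Block

variable (F) (κ₁ κ₂ : Type*) [Fintype κ₁] [Fintype κ₂] [DecidableEq κ₁] [DecidableEq κ₂]

def blockHom : (Matrix κ₁ κ₁ F)ˣ →* (Matrix (κ₁ ⊕ κ₂) (κ₁ ⊕ κ₂) F)ˣ where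
  toFun u := ⟨fromBlocks u.val 0 0 1, fromBlocks (↑u⁻¹) 0 0 1,
    by rw [fromBlocks_multiply]; simp [Matrix.fromBlocks_one],
    by rw [fromBlocks_multiply]; simp [Matrix.fromBlocks_one]⟩
  map_one' := Units.ext (by simp [Matrix.fromBlocks_one])
  map_mul' u v := Units.ext (by simp [fromBlocks_multiply])

lemma blockHom_inj : Function.Injective (blockHom F κ₁ κ₂) := by
  intro u v h
  apply Units.ext
  have := congrArg (fun w : (Matrix (κ₁ ⊕ κ₂) (κ₁ ⊕ κ₂) F)ˣ => Matrix.toBlocks₁₁ w.val) h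
  simpa [blockHom, Matrix.toBlocks_fromBlocks₁₁] using this

lemma blockHom_map (φ : F →+* F) (u : (Matrix κ₁ κ₁ F)ˣ) :
    ((blockHom F κ₁ κ₂ u : Matrix (κ₁ ⊕ κ₂) (κ₁ ⊕ κ₂) F)).map φ
      = fromBlocks (u.val.map φ) 0 0 1 := by
  show (fromBlocks u.val 0 0 1).map φ = _
  rw [fromBlocks_map,
    Matrix.map_zero _ (_root_.map_zero φ), Matrix.map_zero _ (_root_.map_zero φ),
    Matrix.map_one _ (_root_.map_zero φ) (_root_.map_one φ)]

end Block

lemma choose_ge (n : ℕ) (hn : 1 ≤ n) : n*n + 2*n ≤ (2*n+1).choose n := by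
  induction n, hn using Nat.le_induction with
  | base => decide
  | succ n hn ih =>
    have h1 : (2*(n+1)+1).choose (n+1) = (2*n+2).choose n + (2*n+2).choose (n+1) := by
      have : 2*(n+1)+1 = (2*n+2)+1 := by ring
      rw [this, Nat.choose_succ_succ]
    have h2 : (2*n+2).choose (n+1) = (2*n+1).choose n + (2*n+1).choose (n+1) := by
      rw [show 2*n+2 = (2*n+1)+1 by ring, Nat.choose_succ_succ]
    have h3 : (2*n+1).choose (n+1) = (2*n+1).choose n := by
      have := Nat.choose_symm (n := 2*n+1) (k := n) (by omega)
      rw [show 2*n+1-n = n+1 by omega] at this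
      exact this
    have h4 : (2*n+1).choose n ≤ (2*n+2).choose n := Nat.choose_le_choose n (by omega)
    have hge : 3 * ((2*n+1).choose n) ≤ (2*(n+1)+1).choose (n+1) := by omega
    nlinarith [ih, hge]

lemma card_BIdx : Fintype.card (BIdx n) = n*n + 2*n := by
  have e : {p : Fin (n+1) × Fin (n+1) // p.1 = p.2} ≃ Fin (n+1) :=
    { toFun := fun p => p.1.1
      invFun := fun x => ⟨(x,x), rfl⟩
      left_inv := by rintro ⟨⟨a,b⟩,h⟩; cases h; rfl
      right_inv := fun x => rfl }
  have h1 : Fintype.card {p : Fin (n+1) × Fin (n+1) // p.1 ≠ p.2}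
      = (n+1)*(n+1) - (n+1) := by
    rw [Fintype.card_subtype_compl, Fintype.card_congr e]
    simp
  have h2 : Fintype.card (BIdx n)
      = Fintype.card {p : Fin (n+1) × Fin (n+1) // p.1 ≠ p.2} + n := by
    simp [Fintype.card_sum]
  rw [h2, h1]
  have : (n+1)*(n+1) = n*n+2*n+1 := by ring
  omega

end Stmt0Aux


set_option maxHeartbeats 1000000 in
set_option synthInstance.maxHeartbeats 1000000 in
open Stmt0Aux in
/-- for a perfect field `K` with algebraic closure `K̄` and `n ≥ 1`,
with `m = (2n+1).choose n - 1`, there is an injective group homomorphism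
`ι : PGL (n+1) K̄ → GL (m+1) K̄` which is equivariant for the entrywise Galois
actions of `Gal(K̄/K)`. -/
theorem stmt0 (K : Type*) [Field K] [PerfectField K] (n : ℕ) (hn : 1 ≤ n) :
    ∃ ι : (GL (Fin (n + 1)) (AlgebraicClosure K) ⧸
            Subgroup.center (GL (Fin (n + 1)) (AlgebraicClosure K))) →*
          GL (Fin ((2 * n + 1).choose n - 1 + 1)) (AlgebraicClosure K),
      Function.Injective ι ∧
        ∀ (σ : AlgebraicClosure K ≃ₐ[K] AlgebraicClosure K)
          (g : GL (Fin (n + 1)) (AlgebraicClosure K)),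
          ι (QuotientGroup.mk (galGL (n + 1) σ.toRingEquiv g)) =
            galGL ((2 * n + 1).choose n - 1 + 1) σ.toRingEquiv
              (ι (QuotientGroup.mk g)) := by
  classical
  set F := AlgebraicClosure K
  set M := (2 * n + 1).choose n - 1 + 1 with hMdef
  have hM : M = (2*n+1).choose n := by
    have := Nat.choose_pos (show n ≤ 2*n+1 by omega)
    omega
  have hker : ∀ g ∈ Subgroup.center (GL (Fin (n+1)) F), rho g = (1 : (Matrix (BIdx n) (BIdx n) F)ˣ) :=
    fun g hg => Units.ext ((Amat_eq_one_iff g).mpr ((mem_center_iff_scalar g).mp hg))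
  let ι₀ : (GL (Fin (n + 1)) F ⧸ Subgroup.center (GL (Fin (n + 1)) F)) →*
      (Matrix (BIdx n) (BIdx n) F)ˣ := QuotientGroup.lift _ rho hker
  have hι₀mk : ∀ g : GL (Fin (n+1)) F, ι₀ (QuotientGroup.mk g) = rho g := fun g => rfl
  have hι₀inj : Function.Injective ι₀ := by
    intro x y
    refine QuotientGroup.induction_on x fun g => QuotientGroup.induction_on y fun h H => ?_
    rw [QuotientGroup.eq]
    apply (mem_center_iff_scalar _).mpr
    apply (Amat_eq_one_iff _).mp
    have h1 : rho (g⁻¹ * h) = (1 : (Matrix (BIdx n) (BIdx n) F)ˣ) := by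
      rw [_root_.map_mul, _root_.map_inv]
      rw [hι₀mk, hι₀mk] at H
      rw [H, inv_mul_cancel]
    exact congrArg Units.val h1
  have hcard : Fintype.card (BIdx n) ≤ (2*n+1).choose n := by
    rw [card_BIdx]; exact choose_ge n hn
  have hcards : Fintype.card (BIdx n ⊕ Fin (M - Fintype.card (BIdx n)))
      = Fintype.card (Fin M) := by
    rw [Fintype.card_sum, Fintype.card_fin, Fintype.card_fin]
    omega
  let e : (BIdx n ⊕ Fin (M - Fintype.card (BIdx n))) ≃ Fin M := Fintype.equivOfCardEq hcards
  let R := Units.mapEquiv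
    ((Matrix.reindexAlgEquiv F F e).toRingEquiv.toMulEquiv :
      Matrix (BIdx n ⊕ Fin (M - Fintype.card (BIdx n))) (BIdx n ⊕ Fin (M - Fintype.card (BIdx n))) F ≃* Matrix (Fin M) (Fin M) F)
  refine ⟨R.toMonoidHom.comp ((blockHom F (BIdx n) (Fin (M - Fintype.card (BIdx n)))).comp ι₀), ?_, ?_⟩
  · simp only [MonoidHom.coe_comp, MulEquiv.coe_toMonoidHom]
    exact R.injective.comp ((blockHom_inj F _ _).comp hι₀inj)
  · intro σ g
    apply Units.ext
    show (R ((blockHom F _ _) (ι₀ (QuotientGroup.mk (galGL (n+1) σ.toRingEquiv g)))) : Matrix (Fin M) (Fin M) F)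
      = ((galGL M σ.toRingEquiv) (R ((blockHom F _ _) (ι₀ (QuotientGroup.mk g)))) : Matrix (Fin M) (Fin M) F)
    rw [hι₀mk, hι₀mk]
    have hval : ∀ u : GL (Fin (n+1)) F,
        ((R ((blockHom F (BIdx n) (Fin (M - Fintype.card (BIdx n)))) (rho u))) : Matrix (Fin M) (Fin M) F)
          = Matrix.reindex e e (fromBlocks (Amat u) 0 0 1) := by
      intro u
      rw [Units.coe_mapEquiv]
      show (Matrix.reindexAlgEquiv F F e).toRingEquiv.toMulEquiv (fromBlocks (Amat u) 0 0 1) = _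
      simp [Matrix.reindexAlgEquiv_apply]
    have hgal : ((galGL M σ.toRingEquiv) (R ((blockHom F _ _) (rho g))) : Matrix (Fin M) (Fin M) F)
        = ((R ((blockHom F (BIdx n) (Fin (M - Fintype.card (BIdx n)))) (rho g))) : Matrix (Fin M) (Fin M) F).map σ.toRingEquiv.toRingHom := rfl
    rw [hval, hgal, hval]
    rw [Matrix.reindex_apply, Matrix.reindex_apply, ← Matrix.submatrix_map]
    rw [show (fromBlocks (Amat g) 0 0 1).map (σ.toRingEquiv.toRingHom)
        = fromBlocks ((Amat g).map σ.toRingEquiv.toRingHom) 0 0 1 from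
      blockHom_map F (BIdx n) (Fin (M - Fintype.card (BIdx n))) σ.toRingEquiv.toRingHom (rho g)]
    rw [Amat_gal]
end

section
/- Let K be a field and n ≥ 1. Index the homogeneous coordinates ω_α of ℙ^m, m = binomial(2n+1,n) − 1, by the exponent vectors α = (α_0,…,α_n) of nonnegative integers with α_0+⋯+α_n = n+1, and let e_i denote the i-th standard exponent vector. Then a point (ω_α)_α ∈ ℙ^m(K) lies in the image of the Veronese map V_n : ℙ^n(K) → ℙ^m(K) if and only if both of the following hold: (1) for every k ∈ {0,…,n} and every exponent vector α = (α_0,…,α_n), ω_α · (ω_{(n+1)e_k})^n = ∏_{i=0}^{n} (ω_{e_i + n e_k})^{α_i}; and (2) ω_{(n+1)e_k} ≠ 0 for at least one k ∈ {0,…,n}. -/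
/-- a point `(ω_α)_α` of `ℙ^m(K)` (coordinates indexed by the exponent
vectors `α` with `α₀ + ⋯ + α_n = n+1`, given as a not-identically-zero family) lies
in the image of the Veronese map `V_n : ℙ^n(K) → ℙ^m(K)` if and only if
(1) `ω_α · ω_{(n+1)eₖ}ⁿ = ∏ᵢ ω_{eᵢ + n eₖ}^{αᵢ}` for all `k` and all `α`, and
(2) `ω_{(n+1)eₖ} ≠ 0` for some `k`. -/
theorem stmt2 {K : Type*} [Field K] (n : ℕ) (hn : 1 ≤ n)
    (ω : (Fin (n + 1) → ℕ) → K)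
    (hω : ∃ α : Fin (n + 1) → ℕ, (∑ i, α i = n + 1) ∧ ω α ≠ 0) :
    (∃ x : Fin (n + 1) → K, x ≠ 0 ∧ ∃ c : K, c ≠ 0 ∧
        ∀ α : Fin (n + 1) → ℕ, (∑ i, α i = n + 1) → ω α = c * ∏ i, x i ^ α i) ↔
      ((∀ (k : Fin (n + 1)) (α : Fin (n + 1) → ℕ), (∑ i, α i = n + 1) →
          ω α * ω (fun j => if j = k then n + 1 else 0) ^ n =
            ∏ i, ω (fun j => (if j = i then 1 else 0) + if j = k then n else 0) ^ α i) ∧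
        ∃ k : Fin (n + 1), ω (fun j => if j = k then n + 1 else 0) ≠ 0) := by
  have hEk : ∀ k : Fin (n+1), (∑ i, (fun j => if j = k then n + 1 else 0) i) = n + 1 := by
    intro k; simp
  have hEik : ∀ i k : Fin (n+1),
      (∑ j, ((if j = i then 1 else 0) + if j = k then n else 0)) = n + 1 := by
    intro i k; rw [Finset.sum_add_distrib]; simp [add_comm]
  constructor
  · rintro ⟨x, hx, c, hc, h⟩
    have hek : ∀ k, ω (fun j => if j = k then n + 1 else 0) = c * x k ^ (n+1) := by
      intro k
      rw [h _ (hEk k)]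
      congr 1
      rw [Finset.prod_eq_single k] <;> simp +contextual
    constructor
    · intro k α hα
      rw [h α hα, hek k]
      have inner : ∀ i, ω (fun j => (if j = i then 1 else 0) + if j = k then n else 0)
          = c * (x i * x k ^ n) := by
        intro i
        rw [h _ (hEik i k)]
        congr 1
        rw [Finset.prod_congr rfl (fun j _ => pow_add (x j) _ _), Finset.prod_mul_distrib]
        congr 1
        · rw [Finset.prod_eq_single i] <;> simp +contextual
        · rw [Finset.prod_eq_single k] <;> simp +contextual
      simp only [inner, mul_pow, Finset.prod_mul_distrib, Finset.prod_pow_eq_pow_sum, hα,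
        ← pow_mul, ← Finset.mul_sum, hα]
      ring
    · obtain ⟨k, hk⟩ := Function.ne_iff.mp hx
      exact ⟨k, by rw [hek k]; exact mul_ne_zero hc (pow_ne_zero _ hk)⟩
  · rintro ⟨h1, k, hk⟩
    set w := ω (fun j => if j = k then n + 1 else 0) with hw
    have hwn : w ^ n ≠ 0 := pow_ne_zero _ hk
    refine ⟨fun i => ω (fun j => (if j = i then 1 else 0) + if j = k then n else 0),
      ?_, (w ^ n)⁻¹, inv_ne_zero hwn, ?_⟩
    · intro hzero
      apply hk
      have := congrFun hzero k
      simp only [Pi.zero_apply] at this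
      rw [hw, show (fun j => if j = k then n + 1 else 0)
          = (fun j => (if j = k then 1 else 0) + if j = k then n else 0) from
        funext fun j => by by_cases h : j = k <;> simp [h, add_comm]]
      exact this
    · intro α hα
      rw [show (∏ i, ω (fun j => (if j = i then 1 else 0) + if j = k then n else 0) ^ α i)
          = ω α * w ^ n from (h1 k α hα).symm]
      field_simp
end

section
/- Let K be a field. A point (ω₀ : ω₁ : … : ω₉) ∈ ℙ⁹(K) lies in the image of the degree-3 Veronese map V₂ : ℙ²(K) → ℙ⁹(K), (x:y:z) ↦ (x³ : x²y : x²z : xy² : xyz : xz² : y³ : y²z : yz² : z³), if and only if (ω₀, ω₆, ω₉) ≠ (0,0,0) and the following 21 equations hold: ω₀ω₉² = ω₅³, ω₁ω₉² = ω₅²ω₈, ω₂ω₉² = ω₅²ω₉, ω₃ω₉² = ω₅ω₈², ω₄ω₉² = ω₅ω₈ω₉, ω₆ω₉² = ω₈³, ω₇ω₉² = ω₈²ω₉; ω₀ω₆² = ω₃³, ω₁ω₆² = ω₃²ω₆, ω₂ω₆² = ω₃²ω₇, ω₄ω₆² = ω₃ω₆ω₇, ω₅ω₆² = ω₃ω₇²,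 ω₈ω₆² = ω₆ω₇², ω₉ω₆² = ω₇³; ω₃ω₀² = ω₀ω₁², ω₄ω₀² = ω₀ω₁ω₂, ω₅ω₀² = ω₀ω₂², ω₆ω₀² = ω₁³, ω₇ω₀² = ω₁²ω₂, ω₈ω₀² = ω₁ω₂², ω₉ω₀² = ω₂³. -/
/-- a point `(ω₀ : … : ω₉) ∈ ℙ⁹(K)` lies in the image of the degree-3
Veronese map `V₂ : (x:y:z) ↦ (x³ : x²y : x²z : xy² : xyz : xz² : y³ : y²z : yz² : z³)`
iff `(ω₀, ω₆, ω₉) ≠ (0,0,0)` and the 21 listed equations hold. -/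
theorem stmt4 {K : Type*} [Field K] (ω0 ω1 ω2 ω3 ω4 ω5 ω6 ω7 ω8 ω9 : K)
    (hω : ¬(ω0 = 0 ∧ ω1 = 0 ∧ ω2 = 0 ∧ ω3 = 0 ∧ ω4 = 0 ∧
            ω5 = 0 ∧ ω6 = 0 ∧ ω7 = 0 ∧ ω8 = 0 ∧ ω9 = 0)) :
    (∃ x y z c : K, ¬(x = 0 ∧ y = 0 ∧ z = 0) ∧ c ≠ 0 ∧
        ω0 = c * x ^ 3 ∧ ω1 = c * (x ^ 2 * y) ∧ ω2 = c * (x ^ 2 * z) ∧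
        ω3 = c * (x * y ^ 2) ∧ ω4 = c * (x * y * z) ∧ ω5 = c * (x * z ^ 2) ∧
        ω6 = c * y ^ 3 ∧ ω7 = c * (y ^ 2 * z) ∧ ω8 = c * (y * z ^ 2) ∧
        ω9 = c * z ^ 3) ↔
      (¬(ω0 = 0 ∧ ω6 = 0 ∧ ω9 = 0) ∧
        ω0 * ω9 ^ 2 = ω5 ^ 3 ∧
        ω1 * ω9 ^ 2 = ω5 ^ 2 * ω8 ∧
        ω2 * ω9 ^ 2 = ω5 ^ 2 * ω9 ∧
        ω3 * ω9 ^ 2 = ω5 * ω8 ^ 2 ∧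
        ω4 * ω9 ^ 2 = ω5 * ω8 * ω9 ∧
        ω6 * ω9 ^ 2 = ω8 ^ 3 ∧
        ω7 * ω9 ^ 2 = ω8 ^ 2 * ω9 ∧
        ω0 * ω6 ^ 2 = ω3 ^ 3 ∧
        ω1 * ω6 ^ 2 = ω3 ^ 2 * ω6 ∧
        ω2 * ω6 ^ 2 = ω3 ^ 2 * ω7 ∧
        ω4 * ω6 ^ 2 = ω3 * ω6 * ω7 ∧
        ω5 * ω6 ^ 2 = ω3 * ω7 ^ 2 ∧
        ω8 * ω6 ^ 2 = ω6 * ω7 ^ 2 ∧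
        ω9 * ω6 ^ 2 = ω7 ^ 3 ∧
        ω3 * ω0 ^ 2 = ω0 * ω1 ^ 2 ∧
        ω4 * ω0 ^ 2 = ω0 * ω1 * ω2 ∧
        ω5 * ω0 ^ 2 = ω0 * ω2 ^ 2 ∧
        ω6 * ω0 ^ 2 = ω1 ^ 3 ∧
        ω7 * ω0 ^ 2 = ω1 ^ 2 * ω2 ∧
        ω8 * ω0 ^ 2 = ω1 * ω2 ^ 2 ∧
        ω9 * ω0 ^ 2 = ω2 ^ 3) := by
  constructor
  · rintro ⟨x, y, z, c, hxyz, hc, e0, e1, e2, e3, e4, e5, e6, e7, e8, e9⟩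
    subst e0 e1 e2 e3 e4 e5 e6 e7 e8 e9
    refine ⟨?_, by ring, by ring, by ring, by ring, by ring, by ring, by ring,
      by ring, by ring, by ring, by ring, by ring, by ring, by ring,
      by ring, by ring, by ring, by ring, by ring, by ring, by ring⟩
    rintro ⟨h0, h6, h9⟩
    have hx : x = 0 := by
      have := mul_eq_zero.mp h0
      rcases this with h | h
      · exact absurd h hc
      · exact pow_eq_zero_iff (n := 3) (by norm_num) |>.mp h
    have hy : y = 0 := by
      rcases mul_eq_zero.mp h6 with h | h
      · exact absurd h hc
      · exact pow_eq_zero_iff (n := 3) (by norm_num) |>.mp h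
    have hz : z = 0 := by
      rcases mul_eq_zero.mp h9 with h | h
      · exact absurd h hc
      · exact pow_eq_zero_iff (n := 3) (by norm_num) |>.mp h
    exact hxyz ⟨hx, hy, hz⟩
  · rintro ⟨hne, q1, q2, q3, q4, q5, q6, q7, q8, q9, q10, q11, q12, q13, q14,
      q15, q16, q17, q18, q19, q20, q21⟩
    by_cases h0 : ω0 = 0
    · by_cases h6 : ω6 = 0
      · have h9 : ω9 ≠ 0 := fun h => hne ⟨h0, h6, h⟩
        refine ⟨ω5, ω8, ω9, ω9⁻¹ ^ 2, fun h => h9 h.2.2, pow_ne_zero 2 (inv_ne_zero (by assumption)), ?_, ?_, ?_, ?_, ?_, ?_, ?_, ?_, ?_, ?_⟩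
        · field_simp; linear_combination q1
        · field_simp; linear_combination q2
        · field_simp; exact mul_right_cancel₀ h9 (by linear_combination q3)
        · field_simp; linear_combination q4
        · field_simp; exact mul_right_cancel₀ h9 (by linear_combination q5)
        · field_simp <;> ring
        · field_simp; linear_combination q6
        · field_simp; exact mul_right_cancel₀ h9 (by linear_combination q7)
        · field_simp <;> ring
        · field_simp <;> ring
      · refine ⟨ω3, ω6, ω7, ω6⁻¹ ^ 2, fun h => h6 h.2.1, pow_ne_zero 2 (inv_ne_zero (by assumption)), ?_, ?_, ?_, ?_, ?_, ?_, ?_, ?_, ?_, ?_⟩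
        · field_simp; linear_combination q8
        · field_simp; exact mul_right_cancel₀ h6 (by linear_combination q9)
        · field_simp; linear_combination q10
        · field_simp <;> ring
        · field_simp; exact mul_right_cancel₀ h6 (by linear_combination q11)
        · field_simp; linear_combination q12
        · field_simp <;> ring
        · field_simp <;> ring
        · field_simp; exact mul_right_cancel₀ h6 (by linear_combination q13)
        · field_simp; linear_combination q14
    · refine ⟨ω0, ω1, ω2, ω0⁻¹ ^ 2, fun h => h0 h.1, pow_ne_zero 2 (inv_ne_zero (by assumption)), ?_, ?_, ?_, ?_, ?_, ?_, ?_, ?_, ?_, ?_⟩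
      · field_simp <;> ring
      · field_simp <;> ring
      · field_simp <;> ring
      · field_simp; exact mul_right_cancel₀ h0 (by linear_combination q15)
      · field_simp; exact mul_right_cancel₀ h0 (by linear_combination q16)
      · field_simp; exact mul_right_cancel₀ h0 (by linear_combination q17)
      · field_simp; linear_combination q18
      · field_simp; linear_combination q19
      · field_simp; linear_combination q20
      · field_simp; linear_combination q21
end

section
/- Let L/K be a Galois extension of fields of degree 3 with Galois group generated by σ, let l₁ ∈ L, l₂ = σ(l₁), l₃ = σ(l₂) (so σ(l₃) = l₁), and let α ∈ K×. Let M_α be the 10×10 matrix over K whose only nonzero entries are M_α[0,6] = α⁻¹, M_α[1,7] = α⁻¹, M_α[2,3] = 1, M_α[3,8] = α⁻¹, M_α[4,4] = 1, M_α[5,1] = α, M_α[6,9] = α⁻¹, M_α[7,5] = 1, M_α[8,2] = α, M_α[9,0] = α². Let φ be the 10×10 matrix over L (rows and columns indexed 0 through 9) whose only nonzero entries are: row 0: φ[0,0]=l₁, φ[0,6]=l₂, φ[0,9]=l₃; row 1: φ[1,1]=l₁, φ[1,5]=l₂, φ[1,7]=l₃; row 2: φ[2,2]=l₁, φ[2,3]=l₂,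 φ[2,8]=l₃; row 3: φ[3,2]=l₃, φ[3,3]=l₁, φ[3,8]=l₂; row 4: φ[4,4]=1; row 5: φ[5,1]=αl₂, φ[5,5]=αl₃, φ[5,7]=αl₁; row 6: φ[6,0]=αl₃, φ[6,6]=αl₁, φ[6,9]=αl₂; row 7: φ[7,1]=αl₃, φ[7,5]=αl₁, φ[7,7]=αl₂; row 8: φ[8,2]=αl₂, φ[8,3]=αl₃, φ[8,8]=αl₁; row 9: φ[9,0]=α²l₂, φ[9,6]=α²l₃, φ[9,9]=α²l₁. Then M_α · σ(φ) = φ, where σ(φ) denotes σ applied to each entry of φ. Moreover, if {l₁, l₂, l₃} is a K-basis of L, then φ is invertible and M_α = φ · (σ(φ))⁻¹. -/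
open Matrix

/-- The 10×10 matrix `M_α` (entries in `K`, viewed inside `L`). -/
def Mmat (K : Type*) {L : Type*} [Field K] [Field L] [Algebra K L] (α : K) :
    Matrix (Fin 10) (Fin 10) L :=
  Matrix.of fun i j =>
    if i = 0 ∧ j = 6 then (algebraMap K L α)⁻¹ else
    if i = 1 ∧ j = 7 then (algebraMap K L α)⁻¹ else
    if i = 2 ∧ j = 3 then 1 else
    if i = 3 ∧ j = 8 then (algebraMap K L α)⁻¹ else
    if i = 4 ∧ j = 4 then 1 else
    if i = 5 ∧ j = 1 then algebraMap K L α else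
    if i = 6 ∧ j = 9 then (algebraMap K L α)⁻¹ else
    if i = 7 ∧ j = 5 then 1 else
    if i = 8 ∧ j = 2 then algebraMap K L α else
    if i = 9 ∧ j = 0 then algebraMap K L α ^ 2 else 0

/-- The splitting matrix `φ` of Lemma 5.1. -/
def phiMat (K : Type*) {L : Type*} [Field K] [Field L] [Algebra K L]
    (α : K) (l₁ l₂ l₃ : L) : Matrix (Fin 10) (Fin 10) L :=
  let a : L := algebraMap K L α
  Matrix.of fun i j =>
    if i = 0 ∧ j = 0 then l₁ else
    if i = 0 ∧ j = 6 then l₂ else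
    if i = 0 ∧ j = 9 then l₃ else
    if i = 1 ∧ j = 1 then l₁ else
    if i = 1 ∧ j = 5 then l₂ else
    if i = 1 ∧ j = 7 then l₃ else
    if i = 2 ∧ j = 2 then l₁ else
    if i = 2 ∧ j = 3 then l₂ else
    if i = 2 ∧ j = 8 then l₃ else
    if i = 3 ∧ j = 2 then l₃ else
    if i = 3 ∧ j = 3 then l₁ else
    if i = 3 ∧ j = 8 then l₂ else
    if i = 4 ∧ j = 4 then 1 else
    if i = 5 ∧ j = 1 then a * l₂ else
    if i = 5 ∧ j = 5 then a * l₃ else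
    if i = 5 ∧ j = 7 then a * l₁ else
    if i = 6 ∧ j = 0 then a * l₃ else
    if i = 6 ∧ j = 6 then a * l₁ else
    if i = 6 ∧ j = 9 then a * l₂ else
    if i = 7 ∧ j = 1 then a * l₃ else
    if i = 7 ∧ j = 5 then a * l₁ else
    if i = 7 ∧ j = 7 then a * l₂ else
    if i = 8 ∧ j = 2 then a * l₂ else
    if i = 8 ∧ j = 3 then a * l₃ else
    if i = 8 ∧ j = 8 then a * l₁ else
    if i = 9 ∧ j = 0 then a ^ 2 * l₂ else
    if i = 9 ∧ j = 6 then a ^ 2 * l₃ else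
    if i = 9 ∧ j = 9 then a ^ 2 * l₁ else 0


/-- Explicit inverse for `phiMat`. -/
def psiMat (K : Type*) {L : Type*} [Field K] [Field L] [Algebra K L]
    (α : K) (l₁ l₂ l₃ : L) : Matrix (Fin 10) (Fin 10) L :=
  let a : L := algebraMap K L α
  let dd : L := l₁ ^ 3 + l₂ ^ 3 + l₃ ^ 3 - 3 * l₁ * l₂ * l₃
  Matrix.of fun i j =>
    if i = 0 ∧ j = 0 then (a^3*l₁^2 - a^3*l₂*l₃) / (a^3*dd) else
    if i = 0 ∧ j = 6 then (- a^2*l₁*l₂ + a^2*l₃^2) / (a^3*dd) else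
    if i = 0 ∧ j = 9 then (- a*l₁*l₃ + a*l₂^2) / (a^3*dd) else
    if i = 1 ∧ j = 1 then (- a^2*l₁^2 + a^2*l₂*l₃) / (-(a^2)*dd) else
    if i = 1 ∧ j = 5 then (a*l₁*l₃ - a*l₂^2) / (-(a^2)*dd) else
    if i = 1 ∧ j = 7 then (a*l₁*l₂ - a*l₃^2) / (-(a^2)*dd) else
    if i = 2 ∧ j = 2 then (a*l₁^2 - a*l₂*l₃) / (a*dd) else
    if i = 2 ∧ j = 3 then (- a*l₁*l₂ + a*l₃^2) / (a*dd) else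
    if i = 2 ∧ j = 8 then (- l₁*l₃ + l₂^2) / (a*dd) else
    if i = 3 ∧ j = 2 then (- a*l₁*l₃ + a*l₂^2) / (a*dd) else
    if i = 3 ∧ j = 3 then (a*l₁^2 - a*l₂*l₃) / (a*dd) else
    if i = 3 ∧ j = 8 then (- l₁*l₂ + l₃^2) / (a*dd) else
    if i = 4 ∧ j = 4 then 1 else
    if i = 5 ∧ j = 1 then (a^2*l₁*l₃ - a^2*l₂^2) / (-(a^2)*dd) else
    if i = 5 ∧ j = 5 then (a*l₁*l₂ - a*l₃^2) / (-(a^2)*dd) else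
    if i = 5 ∧ j = 7 then (- a*l₁^2 + a*l₂*l₃) / (-(a^2)*dd) else
    if i = 6 ∧ j = 0 then (- a^3*l₁*l₃ + a^3*l₂^2) / (a^3*dd) else
    if i = 6 ∧ j = 6 then (a^2*l₁^2 - a^2*l₂*l₃) / (a^3*dd) else
    if i = 6 ∧ j = 9 then (- a*l₁*l₂ + a*l₃^2) / (a^3*dd) else
    if i = 7 ∧ j = 1 then (a^2*l₁*l₂ - a^2*l₃^2) / (-(a^2)*dd) else
    if i = 7 ∧ j = 5 then (- a*l₁^2 + a*l₂*l₃) / (-(a^2)*dd) else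
    if i = 7 ∧ j = 7 then (a*l₁*l₃ - a*l₂^2) / (-(a^2)*dd) else
    if i = 8 ∧ j = 2 then (- a*l₁*l₂ + a*l₃^2) / (a*dd) else
    if i = 8 ∧ j = 3 then (- a*l₁*l₃ + a*l₂^2) / (a*dd) else
    if i = 8 ∧ j = 8 then (l₁^2 - l₂*l₃) / (a*dd) else
    if i = 9 ∧ j = 0 then (- a^3*l₁*l₂ + a^3*l₃^2) / (a^3*dd) else
    if i = 9 ∧ j = 6 then (- a^2*l₁*l₃ + a^2*l₂^2) / (a^3*dd) else
    if i = 9 ∧ j = 9 then (a*l₁^2 - a*l₂*l₃) / (a^3*dd) else 0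


lemma fmk0 (h : 0 < 10) : (⟨0, h⟩ : Fin 10) = 0 := rfl
lemma fmk1 (h : 1 < 10) : (⟨1, h⟩ : Fin 10) = 1 := rfl
lemma fmk2 (h : 2 < 10) : (⟨2, h⟩ : Fin 10) = 2 := rfl
lemma fmk3 (h : 3 < 10) : (⟨3, h⟩ : Fin 10) = 3 := rfl
lemma fmk4 (h : 4 < 10) : (⟨4, h⟩ : Fin 10) = 4 := rfl
lemma fmk5 (h : 5 < 10) : (⟨5, h⟩ : Fin 10) = 5 := rfl
lemma fmk6 (h : 6 < 10) : (⟨6, h⟩ : Fin 10) = 6 := rfl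
lemma fmk7 (h : 7 < 10) : (⟨7, h⟩ : Fin 10) = 7 := rfl
lemma fmk8 (h : 8 < 10) : (⟨8, h⟩ : Fin 10) = 8 := rfl
lemma fmk9 (h : 9 < 10) : (⟨9, h⟩ : Fin 10) = 9 := rfl

lemma sum10 {M : Type*} [AddCommMonoid M] (f : Fin 10 → M) :
    ∑ i, f i = f 0 + f 1 + f 2 + f 3 + f 4 + f 5 + f 6 + f 7 + f 8 + f 9 := by
  rw [Fin.sum_univ_castSucc, Fin.sum_univ_castSucc, Fin.sum_univ_castSucc,
    Fin.sum_univ_castSucc, Fin.sum_univ_castSucc, Fin.sum_univ_castSucc,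
    Fin.sum_univ_castSucc, Fin.sum_univ_castSucc, Fin.sum_univ_castSucc,
    Fin.sum_univ_one]
  rfl

set_option maxHeartbeats 3000000 in
lemma phi_mul_psi {K L : Type*} [Field K] [Field L] [Algebra K L]
    (α : K) (l₁ l₂ l₃ : L) (ha : (algebraMap K L α) ≠ 0)
    (hd : l₁ ^ 3 + l₂ ^ 3 + l₃ ^ 3 - 3 * l₁ * l₂ * l₃ ≠ 0) :
    phiMat K α l₁ l₂ l₃ * psiMat K α l₁ l₂ l₃ = 1 := by
  have p00 : phiMat K α l₁ l₂ l₃ 0 0 = l₁ := rfl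
  have p01 : phiMat K α l₁ l₂ l₃ 0 1 = 0 := rfl
  have p02 : phiMat K α l₁ l₂ l₃ 0 2 = 0 := rfl
  have p03 : phiMat K α l₁ l₂ l₃ 0 3 = 0 := rfl
  have p04 : phiMat K α l₁ l₂ l₃ 0 4 = 0 := rfl
  have p05 : phiMat K α l₁ l₂ l₃ 0 5 = 0 := rfl
  have p06 : phiMat K α l₁ l₂ l₃ 0 6 = l₂ := rfl
  have p07 : phiMat K α l₁ l₂ l₃ 0 7 = 0 := rfl
  have p08 : phiMat K α l₁ l₂ l₃ 0 8 = 0 := rfl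
  have p09 : phiMat K α l₁ l₂ l₃ 0 9 = l₃ := rfl
  have p10 : phiMat K α l₁ l₂ l₃ 1 0 = 0 := rfl
  have p11 : phiMat K α l₁ l₂ l₃ 1 1 = l₁ := rfl
  have p12 : phiMat K α l₁ l₂ l₃ 1 2 = 0 := rfl
  have p13 : phiMat K α l₁ l₂ l₃ 1 3 = 0 := rfl
  have p14 : phiMat K α l₁ l₂ l₃ 1 4 = 0 := rfl
  have p15 : phiMat K α l₁ l₂ l₃ 1 5 = l₂ := rfl
  have p16 : phiMat K α l₁ l₂ l₃ 1 6 = 0 := rfl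
  have p17 : phiMat K α l₁ l₂ l₃ 1 7 = l₃ := rfl
  have p18 : phiMat K α l₁ l₂ l₃ 1 8 = 0 := rfl
  have p19 : phiMat K α l₁ l₂ l₃ 1 9 = 0 := rfl
  have p20 : phiMat K α l₁ l₂ l₃ 2 0 = 0 := rfl
  have p21 : phiMat K α l₁ l₂ l₃ 2 1 = 0 := rfl
  have p22 : phiMat K α l₁ l₂ l₃ 2 2 = l₁ := rfl
  have p23 : phiMat K α l₁ l₂ l₃ 2 3 = l₂ := rfl
  have p24 : phiMat K α l₁ l₂ l₃ 2 4 = 0 := rfl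
  have p25 : phiMat K α l₁ l₂ l₃ 2 5 = 0 := rfl
  have p26 : phiMat K α l₁ l₂ l₃ 2 6 = 0 := rfl
  have p27 : phiMat K α l₁ l₂ l₃ 2 7 = 0 := rfl
  have p28 : phiMat K α l₁ l₂ l₃ 2 8 = l₃ := rfl
  have p29 : phiMat K α l₁ l₂ l₃ 2 9 = 0 := rfl
  have p30 : phiMat K α l₁ l₂ l₃ 3 0 = 0 := rfl
  have p31 : phiMat K α l₁ l₂ l₃ 3 1 = 0 := rfl
  have p32 : phiMat K α l₁ l₂ l₃ 3 2 = l₃ := rfl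
  have p33 : phiMat K α l₁ l₂ l₃ 3 3 = l₁ := rfl
  have p34 : phiMat K α l₁ l₂ l₃ 3 4 = 0 := rfl
  have p35 : phiMat K α l₁ l₂ l₃ 3 5 = 0 := rfl
  have p36 : phiMat K α l₁ l₂ l₃ 3 6 = 0 := rfl
  have p37 : phiMat K α l₁ l₂ l₃ 3 7 = 0 := rfl
  have p38 : phiMat K α l₁ l₂ l₃ 3 8 = l₂ := rfl
  have p39 : phiMat K α l₁ l₂ l₃ 3 9 = 0 := rfl
  have p40 : phiMat K α l₁ l₂ l₃ 4 0 = 0 := rfl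
  have p41 : phiMat K α l₁ l₂ l₃ 4 1 = 0 := rfl
  have p42 : phiMat K α l₁ l₂ l₃ 4 2 = 0 := rfl
  have p43 : phiMat K α l₁ l₂ l₃ 4 3 = 0 := rfl
  have p44 : phiMat K α l₁ l₂ l₃ 4 4 = 1 := rfl
  have p45 : phiMat K α l₁ l₂ l₃ 4 5 = 0 := rfl
  have p46 : phiMat K α l₁ l₂ l₃ 4 6 = 0 := rfl
  have p47 : phiMat K α l₁ l₂ l₃ 4 7 = 0 := rfl
  have p48 : phiMat K α l₁ l₂ l₃ 4 8 = 0 := rfl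
  have p49 : phiMat K α l₁ l₂ l₃ 4 9 = 0 := rfl
  have p50 : phiMat K α l₁ l₂ l₃ 5 0 = 0 := rfl
  have p51 : phiMat K α l₁ l₂ l₃ 5 1 = (algebraMap K L α)*l₂ := rfl
  have p52 : phiMat K α l₁ l₂ l₃ 5 2 = 0 := rfl
  have p53 : phiMat K α l₁ l₂ l₃ 5 3 = 0 := rfl
  have p54 : phiMat K α l₁ l₂ l₃ 5 4 = 0 := rfl
  have p55 : phiMat K α l₁ l₂ l₃ 5 5 = (algebraMap K L α)*l₃ := rfl
  have p56 : phiMat K α l₁ l₂ l₃ 5 6 = 0 := rfl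
  have p57 : phiMat K α l₁ l₂ l₃ 5 7 = (algebraMap K L α)*l₁ := rfl
  have p58 : phiMat K α l₁ l₂ l₃ 5 8 = 0 := rfl
  have p59 : phiMat K α l₁ l₂ l₃ 5 9 = 0 := rfl
  have p60 : phiMat K α l₁ l₂ l₃ 6 0 = (algebraMap K L α)*l₃ := rfl
  have p61 : phiMat K α l₁ l₂ l₃ 6 1 = 0 := rfl
  have p62 : phiMat K α l₁ l₂ l₃ 6 2 = 0 := rfl
  have p63 : phiMat K α l₁ l₂ l₃ 6 3 = 0 := rfl
  have p64 : phiMat K α l₁ l₂ l₃ 6 4 = 0 := rfl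
  have p65 : phiMat K α l₁ l₂ l₃ 6 5 = 0 := rfl
  have p66 : phiMat K α l₁ l₂ l₃ 6 6 = (algebraMap K L α)*l₁ := rfl
  have p67 : phiMat K α l₁ l₂ l₃ 6 7 = 0 := rfl
  have p68 : phiMat K α l₁ l₂ l₃ 6 8 = 0 := rfl
  have p69 : phiMat K α l₁ l₂ l₃ 6 9 = (algebraMap K L α)*l₂ := rfl
  have p70 : phiMat K α l₁ l₂ l₃ 7 0 = 0 := rfl
  have p71 : phiMat K α l₁ l₂ l₃ 7 1 = (algebraMap K L α)*l₃ := rfl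
  have p72 : phiMat K α l₁ l₂ l₃ 7 2 = 0 := rfl
  have p73 : phiMat K α l₁ l₂ l₃ 7 3 = 0 := rfl
  have p74 : phiMat K α l₁ l₂ l₃ 7 4 = 0 := rfl
  have p75 : phiMat K α l₁ l₂ l₃ 7 5 = (algebraMap K L α)*l₁ := rfl
  have p76 : phiMat K α l₁ l₂ l₃ 7 6 = 0 := rfl
  have p77 : phiMat K α l₁ l₂ l₃ 7 7 = (algebraMap K L α)*l₂ := rfl
  have p78 : phiMat K α l₁ l₂ l₃ 7 8 = 0 := rfl
  have p79 : phiMat K α l₁ l₂ l₃ 7 9 = 0 := rfl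
  have p80 : phiMat K α l₁ l₂ l₃ 8 0 = 0 := rfl
  have p81 : phiMat K α l₁ l₂ l₃ 8 1 = 0 := rfl
  have p82 : phiMat K α l₁ l₂ l₃ 8 2 = (algebraMap K L α)*l₂ := rfl
  have p83 : phiMat K α l₁ l₂ l₃ 8 3 = (algebraMap K L α)*l₃ := rfl
  have p84 : phiMat K α l₁ l₂ l₃ 8 4 = 0 := rfl
  have p85 : phiMat K α l₁ l₂ l₃ 8 5 = 0 := rfl
  have p86 : phiMat K α l₁ l₂ l₃ 8 6 = 0 := rfl
  have p87 : phiMat K α l₁ l₂ l₃ 8 7 = 0 := rfl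
  have p88 : phiMat K α l₁ l₂ l₃ 8 8 = (algebraMap K L α)*l₁ := rfl
  have p89 : phiMat K α l₁ l₂ l₃ 8 9 = 0 := rfl
  have p90 : phiMat K α l₁ l₂ l₃ 9 0 = (algebraMap K L α)^2*l₂ := rfl
  have p91 : phiMat K α l₁ l₂ l₃ 9 1 = 0 := rfl
  have p92 : phiMat K α l₁ l₂ l₃ 9 2 = 0 := rfl
  have p93 : phiMat K α l₁ l₂ l₃ 9 3 = 0 := rfl
  have p94 : phiMat K α l₁ l₂ l₃ 9 4 = 0 := rfl
  have p95 : phiMat K α l₁ l₂ l₃ 9 5 = 0 := rfl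
  have p96 : phiMat K α l₁ l₂ l₃ 9 6 = (algebraMap K L α)^2*l₃ := rfl
  have p97 : phiMat K α l₁ l₂ l₃ 9 7 = 0 := rfl
  have p98 : phiMat K α l₁ l₂ l₃ 9 8 = 0 := rfl
  have p99 : phiMat K α l₁ l₂ l₃ 9 9 = (algebraMap K L α)^2*l₁ := rfl
  have q00 : psiMat K α l₁ l₂ l₃ 0 0 = ((algebraMap K L α)^3*l₁^2 - (algebraMap K L α)^3*l₂*l₃) / ((algebraMap K L α)^3*(l₁ ^ 3 + l₂ ^ 3 + l₃ ^ 3 - 3 * l₁ * l₂ * l₃)) := rfl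
  have q01 : psiMat K α l₁ l₂ l₃ 0 1 = 0 := rfl
  have q02 : psiMat K α l₁ l₂ l₃ 0 2 = 0 := rfl
  have q03 : psiMat K α l₁ l₂ l₃ 0 3 = 0 := rfl
  have q04 : psiMat K α l₁ l₂ l₃ 0 4 = 0 := rfl
  have q05 : psiMat K α l₁ l₂ l₃ 0 5 = 0 := rfl
  have q06 : psiMat K α l₁ l₂ l₃ 0 6 = (- (algebraMap K L α)^2*l₁*l₂ + (algebraMap K L α)^2*l₃^2) / ((algebraMap K L α)^3*(l₁ ^ 3 + l₂ ^ 3 + l₃ ^ 3 - 3 * l₁ * l₂ * l₃)) := rfl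
  have q07 : psiMat K α l₁ l₂ l₃ 0 7 = 0 := rfl
  have q08 : psiMat K α l₁ l₂ l₃ 0 8 = 0 := rfl
  have q09 : psiMat K α l₁ l₂ l₃ 0 9 = (- (algebraMap K L α)*l₁*l₃ + (algebraMap K L α)*l₂^2) / ((algebraMap K L α)^3*(l₁ ^ 3 + l₂ ^ 3 + l₃ ^ 3 - 3 * l₁ * l₂ * l₃)) := rfl
  have q10 : psiMat K α l₁ l₂ l₃ 1 0 = 0 := rfl
  have q11 : psiMat K α l₁ l₂ l₃ 1 1 = (- (algebraMap K L α)^2*l₁^2 + (algebraMap K L α)^2*l₂*l₃) / (-((algebraMap K L α)^2)*(l₁ ^ 3 + l₂ ^ 3 + l₃ ^ 3 - 3 * l₁ * l₂ * l₃)) := rfl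
  have q12 : psiMat K α l₁ l₂ l₃ 1 2 = 0 := rfl
  have q13 : psiMat K α l₁ l₂ l₃ 1 3 = 0 := rfl
  have q14 : psiMat K α l₁ l₂ l₃ 1 4 = 0 := rfl
  have q15 : psiMat K α l₁ l₂ l₃ 1 5 = ((algebraMap K L α)*l₁*l₃ - (algebraMap K L α)*l₂^2) / (-((algebraMap K L α)^2)*(l₁ ^ 3 + l₂ ^ 3 + l₃ ^ 3 - 3 * l₁ * l₂ * l₃)) := rfl
  have q16 : psiMat K α l₁ l₂ l₃ 1 6 = 0 := rfl
  have q17 : psiMat K α l₁ l₂ l₃ 1 7 = ((algebraMap K L α)*l₁*l₂ - (algebraMap K L α)*l₃^2) / (-((algebraMap K L α)^2)*(l₁ ^ 3 + l₂ ^ 3 + l₃ ^ 3 - 3 * l₁ * l₂ * l₃)) := rfl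
  have q18 : psiMat K α l₁ l₂ l₃ 1 8 = 0 := rfl
  have q19 : psiMat K α l₁ l₂ l₃ 1 9 = 0 := rfl
  have q20 : psiMat K α l₁ l₂ l₃ 2 0 = 0 := rfl
  have q21 : psiMat K α l₁ l₂ l₃ 2 1 = 0 := rfl
  have q22 : psiMat K α l₁ l₂ l₃ 2 2 = ((algebraMap K L α)*l₁^2 - (algebraMap K L α)*l₂*l₃) / ((algebraMap K L α)*(l₁ ^ 3 + l₂ ^ 3 + l₃ ^ 3 - 3 * l₁ * l₂ * l₃)) := rfl
  have q23 : psiMat K α l₁ l₂ l₃ 2 3 = (- (algebraMap K L α)*l₁*l₂ + (algebraMap K L α)*l₃^2) / ((algebraMap K L α)*(l₁ ^ 3 + l₂ ^ 3 + l₃ ^ 3 - 3 * l₁ * l₂ * l₃)) := rfl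
  have q24 : psiMat K α l₁ l₂ l₃ 2 4 = 0 := rfl
  have q25 : psiMat K α l₁ l₂ l₃ 2 5 = 0 := rfl
  have q26 : psiMat K α l₁ l₂ l₃ 2 6 = 0 := rfl
  have q27 : psiMat K α l₁ l₂ l₃ 2 7 = 0 := rfl
  have q28 : psiMat K α l₁ l₂ l₃ 2 8 = (- l₁*l₃ + l₂^2) / ((algebraMap K L α)*(l₁ ^ 3 + l₂ ^ 3 + l₃ ^ 3 - 3 * l₁ * l₂ * l₃)) := rfl
  have q29 : psiMat K α l₁ l₂ l₃ 2 9 = 0 := rfl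
  have q30 : psiMat K α l₁ l₂ l₃ 3 0 = 0 := rfl
  have q31 : psiMat K α l₁ l₂ l₃ 3 1 = 0 := rfl
  have q32 : psiMat K α l₁ l₂ l₃ 3 2 = (- (algebraMap K L α)*l₁*l₃ + (algebraMap K L α)*l₂^2) / ((algebraMap K L α)*(l₁ ^ 3 + l₂ ^ 3 + l₃ ^ 3 - 3 * l₁ * l₂ * l₃)) := rfl
  have q33 : psiMat K α l₁ l₂ l₃ 3 3 = ((algebraMap K L α)*l₁^2 - (algebraMap K L α)*l₂*l₃) / ((algebraMap K L α)*(l₁ ^ 3 + l₂ ^ 3 + l₃ ^ 3 - 3 * l₁ * l₂ * l₃)) := rfl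
  have q34 : psiMat K α l₁ l₂ l₃ 3 4 = 0 := rfl
  have q35 : psiMat K α l₁ l₂ l₃ 3 5 = 0 := rfl
  have q36 : psiMat K α l₁ l₂ l₃ 3 6 = 0 := rfl
  have q37 : psiMat K α l₁ l₂ l₃ 3 7 = 0 := rfl
  have q38 : psiMat K α l₁ l₂ l₃ 3 8 = (- l₁*l₂ + l₃^2) / ((algebraMap K L α)*(l₁ ^ 3 + l₂ ^ 3 + l₃ ^ 3 - 3 * l₁ * l₂ * l₃)) := rfl
  have q39 : psiMat K α l₁ l₂ l₃ 3 9 = 0 := rfl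
  have q40 : psiMat K α l₁ l₂ l₃ 4 0 = 0 := rfl
  have q41 : psiMat K α l₁ l₂ l₃ 4 1 = 0 := rfl
  have q42 : psiMat K α l₁ l₂ l₃ 4 2 = 0 := rfl
  have q43 : psiMat K α l₁ l₂ l₃ 4 3 = 0 := rfl
  have q44 : psiMat K α l₁ l₂ l₃ 4 4 = 1 := rfl
  have q45 : psiMat K α l₁ l₂ l₃ 4 5 = 0 := rfl
  have q46 : psiMat K α l₁ l₂ l₃ 4 6 = 0 := rfl
  have q47 : psiMat K α l₁ l₂ l₃ 4 7 = 0 := rfl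
  have q48 : psiMat K α l₁ l₂ l₃ 4 8 = 0 := rfl
  have q49 : psiMat K α l₁ l₂ l₃ 4 9 = 0 := rfl
  have q50 : psiMat K α l₁ l₂ l₃ 5 0 = 0 := rfl
  have q51 : psiMat K α l₁ l₂ l₃ 5 1 = ((algebraMap K L α)^2*l₁*l₃ - (algebraMap K L α)^2*l₂^2) / (-((algebraMap K L α)^2)*(l₁ ^ 3 + l₂ ^ 3 + l₃ ^ 3 - 3 * l₁ * l₂ * l₃)) := rfl
  have q52 : psiMat K α l₁ l₂ l₃ 5 2 = 0 := rfl
  have q53 : psiMat K α l₁ l₂ l₃ 5 3 = 0 := rfl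
  have q54 : psiMat K α l₁ l₂ l₃ 5 4 = 0 := rfl
  have q55 : psiMat K α l₁ l₂ l₃ 5 5 = ((algebraMap K L α)*l₁*l₂ - (algebraMap K L α)*l₃^2) / (-((algebraMap K L α)^2)*(l₁ ^ 3 + l₂ ^ 3 + l₃ ^ 3 - 3 * l₁ * l₂ * l₃)) := rfl
  have q56 : psiMat K α l₁ l₂ l₃ 5 6 = 0 := rfl
  have q57 : psiMat K α l₁ l₂ l₃ 5 7 = (- (algebraMap K L α)*l₁^2 + (algebraMap K L α)*l₂*l₃) / (-((algebraMap K L α)^2)*(l₁ ^ 3 + l₂ ^ 3 + l₃ ^ 3 - 3 * l₁ * l₂ * l₃)) := rfl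
  have q58 : psiMat K α l₁ l₂ l₃ 5 8 = 0 := rfl
  have q59 : psiMat K α l₁ l₂ l₃ 5 9 = 0 := rfl
  have q60 : psiMat K α l₁ l₂ l₃ 6 0 = (- (algebraMap K L α)^3*l₁*l₃ + (algebraMap K L α)^3*l₂^2) / ((algebraMap K L α)^3*(l₁ ^ 3 + l₂ ^ 3 + l₃ ^ 3 - 3 * l₁ * l₂ * l₃)) := rfl
  have q61 : psiMat K α l₁ l₂ l₃ 6 1 = 0 := rfl
  have q62 : psiMat K α l₁ l₂ l₃ 6 2 = 0 := rfl
  have q63 : psiMat K α l₁ l₂ l₃ 6 3 = 0 := rfl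
  have q64 : psiMat K α l₁ l₂ l₃ 6 4 = 0 := rfl
  have q65 : psiMat K α l₁ l₂ l₃ 6 5 = 0 := rfl
  have q66 : psiMat K α l₁ l₂ l₃ 6 6 = ((algebraMap K L α)^2*l₁^2 - (algebraMap K L α)^2*l₂*l₃) / ((algebraMap K L α)^3*(l₁ ^ 3 + l₂ ^ 3 + l₃ ^ 3 - 3 * l₁ * l₂ * l₃)) := rfl
  have q67 : psiMat K α l₁ l₂ l₃ 6 7 = 0 := rfl
  have q68 : psiMat K α l₁ l₂ l₃ 6 8 = 0 := rfl
  have q69 : psiMat K α l₁ l₂ l₃ 6 9 = (- (algebraMap K L α)*l₁*l₂ + (algebraMap K L α)*l₃^2) / ((algebraMap K L α)^3*(l₁ ^ 3 + l₂ ^ 3 + l₃ ^ 3 - 3 * l₁ * l₂ * l₃)) := rfl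
  have q70 : psiMat K α l₁ l₂ l₃ 7 0 = 0 := rfl
  have q71 : psiMat K α l₁ l₂ l₃ 7 1 = ((algebraMap K L α)^2*l₁*l₂ - (algebraMap K L α)^2*l₃^2) / (-((algebraMap K L α)^2)*(l₁ ^ 3 + l₂ ^ 3 + l₃ ^ 3 - 3 * l₁ * l₂ * l₃)) := rfl
  have q72 : psiMat K α l₁ l₂ l₃ 7 2 = 0 := rfl
  have q73 : psiMat K α l₁ l₂ l₃ 7 3 = 0 := rfl
  have q74 : psiMat K α l₁ l₂ l₃ 7 4 = 0 := rfl
  have q75 : psiMat K α l₁ l₂ l₃ 7 5 = (- (algebraMap K L α)*l₁^2 + (algebraMap K L α)*l₂*l₃) / (-((algebraMap K L α)^2)*(l₁ ^ 3 + l₂ ^ 3 + l₃ ^ 3 - 3 * l₁ * l₂ * l₃)) := rfl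
  have q76 : psiMat K α l₁ l₂ l₃ 7 6 = 0 := rfl
  have q77 : psiMat K α l₁ l₂ l₃ 7 7 = ((algebraMap K L α)*l₁*l₃ - (algebraMap K L α)*l₂^2) / (-((algebraMap K L α)^2)*(l₁ ^ 3 + l₂ ^ 3 + l₃ ^ 3 - 3 * l₁ * l₂ * l₃)) := rfl
  have q78 : psiMat K α l₁ l₂ l₃ 7 8 = 0 := rfl
  have q79 : psiMat K α l₁ l₂ l₃ 7 9 = 0 := rfl
  have q80 : psiMat K α l₁ l₂ l₃ 8 0 = 0 := rfl
  have q81 : psiMat K α l₁ l₂ l₃ 8 1 = 0 := rfl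
  have q82 : psiMat K α l₁ l₂ l₃ 8 2 = (- (algebraMap K L α)*l₁*l₂ + (algebraMap K L α)*l₃^2) / ((algebraMap K L α)*(l₁ ^ 3 + l₂ ^ 3 + l₃ ^ 3 - 3 * l₁ * l₂ * l₃)) := rfl
  have q83 : psiMat K α l₁ l₂ l₃ 8 3 = (- (algebraMap K L α)*l₁*l₃ + (algebraMap K L α)*l₂^2) / ((algebraMap K L α)*(l₁ ^ 3 + l₂ ^ 3 + l₃ ^ 3 - 3 * l₁ * l₂ * l₃)) := rfl
  have q84 : psiMat K α l₁ l₂ l₃ 8 4 = 0 := rfl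
  have q85 : psiMat K α l₁ l₂ l₃ 8 5 = 0 := rfl
  have q86 : psiMat K α l₁ l₂ l₃ 8 6 = 0 := rfl
  have q87 : psiMat K α l₁ l₂ l₃ 8 7 = 0 := rfl
  have q88 : psiMat K α l₁ l₂ l₃ 8 8 = (l₁^2 - l₂*l₃) / ((algebraMap K L α)*(l₁ ^ 3 + l₂ ^ 3 + l₃ ^ 3 - 3 * l₁ * l₂ * l₃)) := rfl
  have q89 : psiMat K α l₁ l₂ l₃ 8 9 = 0 := rfl
  have q90 : psiMat K α l₁ l₂ l₃ 9 0 = (- (algebraMap K L α)^3*l₁*l₂ + (algebraMap K L α)^3*l₃^2) / ((algebraMap K L α)^3*(l₁ ^ 3 + l₂ ^ 3 + l₃ ^ 3 - 3 * l₁ * l₂ * l₃)) := rfl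
  have q91 : psiMat K α l₁ l₂ l₃ 9 1 = 0 := rfl
  have q92 : psiMat K α l₁ l₂ l₃ 9 2 = 0 := rfl
  have q93 : psiMat K α l₁ l₂ l₃ 9 3 = 0 := rfl
  have q94 : psiMat K α l₁ l₂ l₃ 9 4 = 0 := rfl
  have q95 : psiMat K α l₁ l₂ l₃ 9 5 = 0 := rfl
  have q96 : psiMat K α l₁ l₂ l₃ 9 6 = (- (algebraMap K L α)^2*l₁*l₃ + (algebraMap K L α)^2*l₂^2) / ((algebraMap K L α)^3*(l₁ ^ 3 + l₂ ^ 3 + l₃ ^ 3 - 3 * l₁ * l₂ * l₃)) := rfl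
  have q97 : psiMat K α l₁ l₂ l₃ 9 7 = 0 := rfl
  have q98 : psiMat K α l₁ l₂ l₃ 9 8 = 0 := rfl
  have q99 : psiMat K α l₁ l₂ l₃ 9 9 = ((algebraMap K L α)*l₁^2 - (algebraMap K L α)*l₂*l₃) / ((algebraMap K L α)^3*(l₁ ^ 3 + l₂ ^ 3 + l₃ ^ 3 - 3 * l₁ * l₂ * l₃)) := rfl
  have o00 : (1 : Matrix (Fin 10) (Fin 10) L) 0 0 = 1 := rfl
  have o01 : (1 : Matrix (Fin 10) (Fin 10) L) 0 1 = 0 := rfl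
  have o02 : (1 : Matrix (Fin 10) (Fin 10) L) 0 2 = 0 := rfl
  have o03 : (1 : Matrix (Fin 10) (Fin 10) L) 0 3 = 0 := rfl
  have o04 : (1 : Matrix (Fin 10) (Fin 10) L) 0 4 = 0 := rfl
  have o05 : (1 : Matrix (Fin 10) (Fin 10) L) 0 5 = 0 := rfl
  have o06 : (1 : Matrix (Fin 10) (Fin 10) L) 0 6 = 0 := rfl
  have o07 : (1 : Matrix (Fin 10) (Fin 10) L) 0 7 = 0 := rfl
  have o08 : (1 : Matrix (Fin 10) (Fin 10) L) 0 8 = 0 := rfl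
  have o09 : (1 : Matrix (Fin 10) (Fin 10) L) 0 9 = 0 := rfl
  have o10 : (1 : Matrix (Fin 10) (Fin 10) L) 1 0 = 0 := rfl
  have o11 : (1 : Matrix (Fin 10) (Fin 10) L) 1 1 = 1 := rfl
  have o12 : (1 : Matrix (Fin 10) (Fin 10) L) 1 2 = 0 := rfl
  have o13 : (1 : Matrix (Fin 10) (Fin 10) L) 1 3 = 0 := rfl
  have o14 : (1 : Matrix (Fin 10) (Fin 10) L) 1 4 = 0 := rfl
  have o15 : (1 : Matrix (Fin 10) (Fin 10) L) 1 5 = 0 := rfl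
  have o16 : (1 : Matrix (Fin 10) (Fin 10) L) 1 6 = 0 := rfl
  have o17 : (1 : Matrix (Fin 10) (Fin 10) L) 1 7 = 0 := rfl
  have o18 : (1 : Matrix (Fin 10) (Fin 10) L) 1 8 = 0 := rfl
  have o19 : (1 : Matrix (Fin 10) (Fin 10) L) 1 9 = 0 := rfl
  have o20 : (1 : Matrix (Fin 10) (Fin 10) L) 2 0 = 0 := rfl
  have o21 : (1 : Matrix (Fin 10) (Fin 10) L) 2 1 = 0 := rfl
  have o22 : (1 : Matrix (Fin 10) (Fin 10) L) 2 2 = 1 := rfl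
  have o23 : (1 : Matrix (Fin 10) (Fin 10) L) 2 3 = 0 := rfl
  have o24 : (1 : Matrix (Fin 10) (Fin 10) L) 2 4 = 0 := rfl
  have o25 : (1 : Matrix (Fin 10) (Fin 10) L) 2 5 = 0 := rfl
  have o26 : (1 : Matrix (Fin 10) (Fin 10) L) 2 6 = 0 := rfl
  have o27 : (1 : Matrix (Fin 10) (Fin 10) L) 2 7 = 0 := rfl
  have o28 : (1 : Matrix (Fin 10) (Fin 10) L) 2 8 = 0 := rfl
  have o29 : (1 : Matrix (Fin 10) (Fin 10) L) 2 9 = 0 := rfl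
  have o30 : (1 : Matrix (Fin 10) (Fin 10) L) 3 0 = 0 := rfl
  have o31 : (1 : Matrix (Fin 10) (Fin 10) L) 3 1 = 0 := rfl
  have o32 : (1 : Matrix (Fin 10) (Fin 10) L) 3 2 = 0 := rfl
  have o33 : (1 : Matrix (Fin 10) (Fin 10) L) 3 3 = 1 := rfl
  have o34 : (1 : Matrix (Fin 10) (Fin 10) L) 3 4 = 0 := rfl
  have o35 : (1 : Matrix (Fin 10) (Fin 10) L) 3 5 = 0 := rfl
  have o36 : (1 : Matrix (Fin 10) (Fin 10) L) 3 6 = 0 := rfl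
  have o37 : (1 : Matrix (Fin 10) (Fin 10) L) 3 7 = 0 := rfl
  have o38 : (1 : Matrix (Fin 10) (Fin 10) L) 3 8 = 0 := rfl
  have o39 : (1 : Matrix (Fin 10) (Fin 10) L) 3 9 = 0 := rfl
  have o40 : (1 : Matrix (Fin 10) (Fin 10) L) 4 0 = 0 := rfl
  have o41 : (1 : Matrix (Fin 10) (Fin 10) L) 4 1 = 0 := rfl
  have o42 : (1 : Matrix (Fin 10) (Fin 10) L) 4 2 = 0 := rfl
  have o43 : (1 : Matrix (Fin 10) (Fin 10) L) 4 3 = 0 := rfl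
  have o44 : (1 : Matrix (Fin 10) (Fin 10) L) 4 4 = 1 := rfl
  have o45 : (1 : Matrix (Fin 10) (Fin 10) L) 4 5 = 0 := rfl
  have o46 : (1 : Matrix (Fin 10) (Fin 10) L) 4 6 = 0 := rfl
  have o47 : (1 : Matrix (Fin 10) (Fin 10) L) 4 7 = 0 := rfl
  have o48 : (1 : Matrix (Fin 10) (Fin 10) L) 4 8 = 0 := rfl
  have o49 : (1 : Matrix (Fin 10) (Fin 10) L) 4 9 = 0 := rfl
  have o50 : (1 : Matrix (Fin 10) (Fin 10) L) 5 0 = 0 := rfl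
  have o51 : (1 : Matrix (Fin 10) (Fin 10) L) 5 1 = 0 := rfl
  have o52 : (1 : Matrix (Fin 10) (Fin 10) L) 5 2 = 0 := rfl
  have o53 : (1 : Matrix (Fin 10) (Fin 10) L) 5 3 = 0 := rfl
  have o54 : (1 : Matrix (Fin 10) (Fin 10) L) 5 4 = 0 := rfl
  have o55 : (1 : Matrix (Fin 10) (Fin 10) L) 5 5 = 1 := rfl
  have o56 : (1 : Matrix (Fin 10) (Fin 10) L) 5 6 = 0 := rfl
  have o57 : (1 : Matrix (Fin 10) (Fin 10) L) 5 7 = 0 := rfl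
  have o58 : (1 : Matrix (Fin 10) (Fin 10) L) 5 8 = 0 := rfl
  have o59 : (1 : Matrix (Fin 10) (Fin 10) L) 5 9 = 0 := rfl
  have o60 : (1 : Matrix (Fin 10) (Fin 10) L) 6 0 = 0 := rfl
  have o61 : (1 : Matrix (Fin 10) (Fin 10) L) 6 1 = 0 := rfl
  have o62 : (1 : Matrix (Fin 10) (Fin 10) L) 6 2 = 0 := rfl
  have o63 : (1 : Matrix (Fin 10) (Fin 10) L) 6 3 = 0 := rfl
  have o64 : (1 : Matrix (Fin 10) (Fin 10) L) 6 4 = 0 := rfl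
  have o65 : (1 : Matrix (Fin 10) (Fin 10) L) 6 5 = 0 := rfl
  have o66 : (1 : Matrix (Fin 10) (Fin 10) L) 6 6 = 1 := rfl
  have o67 : (1 : Matrix (Fin 10) (Fin 10) L) 6 7 = 0 := rfl
  have o68 : (1 : Matrix (Fin 10) (Fin 10) L) 6 8 = 0 := rfl
  have o69 : (1 : Matrix (Fin 10) (Fin 10) L) 6 9 = 0 := rfl
  have o70 : (1 : Matrix (Fin 10) (Fin 10) L) 7 0 = 0 := rfl
  have o71 : (1 : Matrix (Fin 10) (Fin 10) L) 7 1 = 0 := rfl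
  have o72 : (1 : Matrix (Fin 10) (Fin 10) L) 7 2 = 0 := rfl
  have o73 : (1 : Matrix (Fin 10) (Fin 10) L) 7 3 = 0 := rfl
  have o74 : (1 : Matrix (Fin 10) (Fin 10) L) 7 4 = 0 := rfl
  have o75 : (1 : Matrix (Fin 10) (Fin 10) L) 7 5 = 0 := rfl
  have o76 : (1 : Matrix (Fin 10) (Fin 10) L) 7 6 = 0 := rfl
  have o77 : (1 : Matrix (Fin 10) (Fin 10) L) 7 7 = 1 := rfl
  have o78 : (1 : Matrix (Fin 10) (Fin 10) L) 7 8 = 0 := rfl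
  have o79 : (1 : Matrix (Fin 10) (Fin 10) L) 7 9 = 0 := rfl
  have o80 : (1 : Matrix (Fin 10) (Fin 10) L) 8 0 = 0 := rfl
  have o81 : (1 : Matrix (Fin 10) (Fin 10) L) 8 1 = 0 := rfl
  have o82 : (1 : Matrix (Fin 10) (Fin 10) L) 8 2 = 0 := rfl
  have o83 : (1 : Matrix (Fin 10) (Fin 10) L) 8 3 = 0 := rfl
  have o84 : (1 : Matrix (Fin 10) (Fin 10) L) 8 4 = 0 := rfl
  have o85 : (1 : Matrix (Fin 10) (Fin 10) L) 8 5 = 0 := rfl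
  have o86 : (1 : Matrix (Fin 10) (Fin 10) L) 8 6 = 0 := rfl
  have o87 : (1 : Matrix (Fin 10) (Fin 10) L) 8 7 = 0 := rfl
  have o88 : (1 : Matrix (Fin 10) (Fin 10) L) 8 8 = 1 := rfl
  have o89 : (1 : Matrix (Fin 10) (Fin 10) L) 8 9 = 0 := rfl
  have o90 : (1 : Matrix (Fin 10) (Fin 10) L) 9 0 = 0 := rfl
  have o91 : (1 : Matrix (Fin 10) (Fin 10) L) 9 1 = 0 := rfl
  have o92 : (1 : Matrix (Fin 10) (Fin 10) L) 9 2 = 0 := rfl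
  have o93 : (1 : Matrix (Fin 10) (Fin 10) L) 9 3 = 0 := rfl
  have o94 : (1 : Matrix (Fin 10) (Fin 10) L) 9 4 = 0 := rfl
  have o95 : (1 : Matrix (Fin 10) (Fin 10) L) 9 5 = 0 := rfl
  have o96 : (1 : Matrix (Fin 10) (Fin 10) L) 9 6 = 0 := rfl
  have o97 : (1 : Matrix (Fin 10) (Fin 10) L) 9 7 = 0 := rfl
  have o98 : (1 : Matrix (Fin 10) (Fin 10) L) 9 8 = 0 := rfl
  have o99 : (1 : Matrix (Fin 10) (Fin 10) L) 9 9 = 1 := rfl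
  have hd' : l₁ ^ 3 + l₂ ^ 3 + l₃ ^ 3 - l₁ * l₂ * l₃ * 3 ≠ 0 := by
    intro h; exact hd (by linear_combination h)
  have hd'1 : l₁ ^ 3 + l₂ ^ 3 + l₃ ^ 3 - l₁ * l₃ * l₂ * 3 ≠ 0 := by
    intro h; exact hd (by linear_combination h)
  have hd'2 : l₁ ^ 3 + l₂ ^ 3 + l₃ ^ 3 - l₂ * l₁ * l₃ * 3 ≠ 0 := by
    intro h; exact hd (by linear_combination h)
  have hd'3 : l₁ ^ 3 + l₂ ^ 3 + l₃ ^ 3 - l₂ * l₃ * l₁ * 3 ≠ 0 := by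
    intro h; exact hd (by linear_combination h)
  have hd'4 : l₁ ^ 3 + l₂ ^ 3 + l₃ ^ 3 - l₃ * l₁ * l₂ * 3 ≠ 0 := by
    intro h; exact hd (by linear_combination h)
  have hd'5 : l₁ ^ 3 + l₂ ^ 3 + l₃ ^ 3 - l₃ * l₂ * l₁ * 3 ≠ 0 := by
    intro h; exact hd (by linear_combination h)
  ext i j
  rw [Matrix.mul_apply, sum10]
  fin_cases i <;> fin_cases j <;>
  · simp only [fmk0,fmk1,fmk2,fmk3,fmk4,fmk5,fmk6,fmk7,fmk8,fmk9, p00,p01,p02,p03,p04,p05,p06,p07,p08,p09,p10,p11,p12,p13,p14,p15,p16,p17,p18,p19,p20,p21,p22,p23,p24,p25,p26,p27,p28,p29,p30,p31,p32,p33,p34,p35,p36,p37,p38,p39,p40,p41,p42,p43,p44,p45,p46,p47,p48,p49,p50,p51,p52,p53,p54,p55,p56,p57,p58,p59,p60,p61,p62,p63,p64,p65,p66,p67,p68,p69,p70,p71,p72,p73,p74,p75,p76,p77,p78,p79,p80,p81,p82,p83,p84,p85,p86,p87,p88,p89,p90,p91,p92,p93,p94,p95,p96,p97,p98,p99,q0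0,q01,q02,q03,q04,q05,q06,q07,q08,q09,q10,q11,q12,q13,q14,q15,q16,q17,q18,q19,q20,q21,q22,q23,q24,q25,q26,q27,q28,q29,q30,q31,q32,q33,q34,q35,q36,q37,q38,q39,q40,q41,q42,q43,q44,q45,q46,q47,q48,q49,q50,q51,q52,q53,q54,q55,q56,q57,q58,q59,q60,q61,q62,q63,q64,q65,q66,q67,q68,q69,q70,q71,q72,q73,q74,q75,q76,q77,q78,q79,q80,q81,q82,q83,q84,q85,q86,q87,q88,q89,q90,q91,q92,q93,q94,q95,q96,q97,q98,q99,o00,o01,o02,o03,o04,o05,o06,o07,o08,o09,o10,o11,o12,o13,o14,o15,o16,o17,o18,o19,o20,o21,o22,o23,o24,o25,o26,o27,o28,o29,o30,o31,o32,o33,o34,o35,o36,o37,o38,o39,o40,o41,o42,o43,o44,o45,o46,o47,o48,o49,o50,o51,o52,o53,o54,o55,o56,o57,o58,o59,o60,o61,o62,o63,o64,o65,o66,o67,o68,o69,o70,o71,o72,o73,o74,o75,o76,o77,o78,o79,o80,o81,o82,o83,o84,o85,o86,o87,o88,o89,o90,o91,o92,o93,o94,o95,o96,o97,o98,o99, Matrix.one_apply,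 Fin.mk.injEq, Fin.reduceEq, Nat.reduceEqDiff, ↓reduceIte, mul_one, zero_mul, mul_zero, add_zero, zero_add]
    all_goals field_simp
    try ring

set_option maxHeartbeats 3000000 in
lemma part1_lemma {K L : Type*} [Field K] [Field L] [Algebra K L]
    (σ : L ≃ₐ[K] L) (l₁ l₂ l₃ : L) (hl₂ : l₂ = σ l₁) (hl₃ : l₃ = σ l₂) (hl₁ : σ l₃ = l₁)
    (α : K) (ha : (algebraMap K L α) ≠ 0) :
    Mmat K α * (phiMat K α l₁ l₂ l₃).map (fun t => σ t) = phiMat K α l₁ l₂ l₃ := by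
  have p00 : phiMat K α l₁ l₂ l₃ 0 0 = l₁ := rfl
  have p01 : phiMat K α l₁ l₂ l₃ 0 1 = 0 := rfl
  have p02 : phiMat K α l₁ l₂ l₃ 0 2 = 0 := rfl
  have p03 : phiMat K α l₁ l₂ l₃ 0 3 = 0 := rfl
  have p04 : phiMat K α l₁ l₂ l₃ 0 4 = 0 := rfl
  have p05 : phiMat K α l₁ l₂ l₃ 0 5 = 0 := rfl
  have p06 : phiMat K α l₁ l₂ l₃ 0 6 = l₂ := rfl
  have p07 : phiMat K α l₁ l₂ l₃ 0 7 = 0 := rfl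
  have p08 : phiMat K α l₁ l₂ l₃ 0 8 = 0 := rfl
  have p09 : phiMat K α l₁ l₂ l₃ 0 9 = l₃ := rfl
  have p10 : phiMat K α l₁ l₂ l₃ 1 0 = 0 := rfl
  have p11 : phiMat K α l₁ l₂ l₃ 1 1 = l₁ := rfl
  have p12 : phiMat K α l₁ l₂ l₃ 1 2 = 0 := rfl
  have p13 : phiMat K α l₁ l₂ l₃ 1 3 = 0 := rfl
  have p14 : phiMat K α l₁ l₂ l₃ 1 4 = 0 := rfl
  have p15 : phiMat K α l₁ l₂ l₃ 1 5 = l₂ := rfl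
  have p16 : phiMat K α l₁ l₂ l₃ 1 6 = 0 := rfl
  have p17 : phiMat K α l₁ l₂ l₃ 1 7 = l₃ := rfl
  have p18 : phiMat K α l₁ l₂ l₃ 1 8 = 0 := rfl
  have p19 : phiMat K α l₁ l₂ l₃ 1 9 = 0 := rfl
  have p20 : phiMat K α l₁ l₂ l₃ 2 0 = 0 := rfl
  have p21 : phiMat K α l₁ l₂ l₃ 2 1 = 0 := rfl
  have p22 : phiMat K α l₁ l₂ l₃ 2 2 = l₁ := rfl
  have p23 : phiMat K α l₁ l₂ l₃ 2 3 = l₂ := rfl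
  have p24 : phiMat K α l₁ l₂ l₃ 2 4 = 0 := rfl
  have p25 : phiMat K α l₁ l₂ l₃ 2 5 = 0 := rfl
  have p26 : phiMat K α l₁ l₂ l₃ 2 6 = 0 := rfl
  have p27 : phiMat K α l₁ l₂ l₃ 2 7 = 0 := rfl
  have p28 : phiMat K α l₁ l₂ l₃ 2 8 = l₃ := rfl
  have p29 : phiMat K α l₁ l₂ l₃ 2 9 = 0 := rfl
  have p30 : phiMat K α l₁ l₂ l₃ 3 0 = 0 := rfl
  have p31 : phiMat K α l₁ l₂ l₃ 3 1 = 0 := rfl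
  have p32 : phiMat K α l₁ l₂ l₃ 3 2 = l₃ := rfl
  have p33 : phiMat K α l₁ l₂ l₃ 3 3 = l₁ := rfl
  have p34 : phiMat K α l₁ l₂ l₃ 3 4 = 0 := rfl
  have p35 : phiMat K α l₁ l₂ l₃ 3 5 = 0 := rfl
  have p36 : phiMat K α l₁ l₂ l₃ 3 6 = 0 := rfl
  have p37 : phiMat K α l₁ l₂ l₃ 3 7 = 0 := rfl
  have p38 : phiMat K α l₁ l₂ l₃ 3 8 = l₂ := rfl
  have p39 : phiMat K α l₁ l₂ l₃ 3 9 = 0 := rfl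
  have p40 : phiMat K α l₁ l₂ l₃ 4 0 = 0 := rfl
  have p41 : phiMat K α l₁ l₂ l₃ 4 1 = 0 := rfl
  have p42 : phiMat K α l₁ l₂ l₃ 4 2 = 0 := rfl
  have p43 : phiMat K α l₁ l₂ l₃ 4 3 = 0 := rfl
  have p44 : phiMat K α l₁ l₂ l₃ 4 4 = 1 := rfl
  have p45 : phiMat K α l₁ l₂ l₃ 4 5 = 0 := rfl
  have p46 : phiMat K α l₁ l₂ l₃ 4 6 = 0 := rfl
  have p47 : phiMat K α l₁ l₂ l₃ 4 7 = 0 := rfl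
  have p48 : phiMat K α l₁ l₂ l₃ 4 8 = 0 := rfl
  have p49 : phiMat K α l₁ l₂ l₃ 4 9 = 0 := rfl
  have p50 : phiMat K α l₁ l₂ l₃ 5 0 = 0 := rfl
  have p51 : phiMat K α l₁ l₂ l₃ 5 1 = (algebraMap K L α)*l₂ := rfl
  have p52 : phiMat K α l₁ l₂ l₃ 5 2 = 0 := rfl
  have p53 : phiMat K α l₁ l₂ l₃ 5 3 = 0 := rfl
  have p54 : phiMat K α l₁ l₂ l₃ 5 4 = 0 := rfl
  have p55 : phiMat K α l₁ l₂ l₃ 5 5 = (algebraMap K L α)*l₃ := rfl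
  have p56 : phiMat K α l₁ l₂ l₃ 5 6 = 0 := rfl
  have p57 : phiMat K α l₁ l₂ l₃ 5 7 = (algebraMap K L α)*l₁ := rfl
  have p58 : phiMat K α l₁ l₂ l₃ 5 8 = 0 := rfl
  have p59 : phiMat K α l₁ l₂ l₃ 5 9 = 0 := rfl
  have p60 : phiMat K α l₁ l₂ l₃ 6 0 = (algebraMap K L α)*l₃ := rfl
  have p61 : phiMat K α l₁ l₂ l₃ 6 1 = 0 := rfl
  have p62 : phiMat K α l₁ l₂ l₃ 6 2 = 0 := rfl
  have p63 : phiMat K α l₁ l₂ l₃ 6 3 = 0 := rfl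
  have p64 : phiMat K α l₁ l₂ l₃ 6 4 = 0 := rfl
  have p65 : phiMat K α l₁ l₂ l₃ 6 5 = 0 := rfl
  have p66 : phiMat K α l₁ l₂ l₃ 6 6 = (algebraMap K L α)*l₁ := rfl
  have p67 : phiMat K α l₁ l₂ l₃ 6 7 = 0 := rfl
  have p68 : phiMat K α l₁ l₂ l₃ 6 8 = 0 := rfl
  have p69 : phiMat K α l₁ l₂ l₃ 6 9 = (algebraMap K L α)*l₂ := rfl
  have p70 : phiMat K α l₁ l₂ l₃ 7 0 = 0 := rfl
  have p71 : phiMat K α l₁ l₂ l₃ 7 1 = (algebraMap K L α)*l₃ := rfl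
  have p72 : phiMat K α l₁ l₂ l₃ 7 2 = 0 := rfl
  have p73 : phiMat K α l₁ l₂ l₃ 7 3 = 0 := rfl
  have p74 : phiMat K α l₁ l₂ l₃ 7 4 = 0 := rfl
  have p75 : phiMat K α l₁ l₂ l₃ 7 5 = (algebraMap K L α)*l₁ := rfl
  have p76 : phiMat K α l₁ l₂ l₃ 7 6 = 0 := rfl
  have p77 : phiMat K α l₁ l₂ l₃ 7 7 = (algebraMap K L α)*l₂ := rfl
  have p78 : phiMat K α l₁ l₂ l₃ 7 8 = 0 := rfl
  have p79 : phiMat K α l₁ l₂ l₃ 7 9 = 0 := rfl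
  have p80 : phiMat K α l₁ l₂ l₃ 8 0 = 0 := rfl
  have p81 : phiMat K α l₁ l₂ l₃ 8 1 = 0 := rfl
  have p82 : phiMat K α l₁ l₂ l₃ 8 2 = (algebraMap K L α)*l₂ := rfl
  have p83 : phiMat K α l₁ l₂ l₃ 8 3 = (algebraMap K L α)*l₃ := rfl
  have p84 : phiMat K α l₁ l₂ l₃ 8 4 = 0 := rfl
  have p85 : phiMat K α l₁ l₂ l₃ 8 5 = 0 := rfl
  have p86 : phiMat K α l₁ l₂ l₃ 8 6 = 0 := rfl
  have p87 : phiMat K α l₁ l₂ l₃ 8 7 = 0 := rfl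
  have p88 : phiMat K α l₁ l₂ l₃ 8 8 = (algebraMap K L α)*l₁ := rfl
  have p89 : phiMat K α l₁ l₂ l₃ 8 9 = 0 := rfl
  have p90 : phiMat K α l₁ l₂ l₃ 9 0 = (algebraMap K L α)^2*l₂ := rfl
  have p91 : phiMat K α l₁ l₂ l₃ 9 1 = 0 := rfl
  have p92 : phiMat K α l₁ l₂ l₃ 9 2 = 0 := rfl
  have p93 : phiMat K α l₁ l₂ l₃ 9 3 = 0 := rfl
  have p94 : phiMat K α l₁ l₂ l₃ 9 4 = 0 := rfl
  have p95 : phiMat K α l₁ l₂ l₃ 9 5 = 0 := rfl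
  have p96 : phiMat K α l₁ l₂ l₃ 9 6 = (algebraMap K L α)^2*l₃ := rfl
  have p97 : phiMat K α l₁ l₂ l₃ 9 7 = 0 := rfl
  have p98 : phiMat K α l₁ l₂ l₃ 9 8 = 0 := rfl
  have p99 : phiMat K α l₁ l₂ l₃ 9 9 = (algebraMap K L α)^2*l₁ := rfl
  have m00 : Mmat K (L := L) α 0 0 = ((0) : L) := rfl
  have m01 : Mmat K (L := L) α 0 1 = ((0) : L) := rfl
  have m02 : Mmat K (L := L) α 0 2 = ((0) : L) := rfl
  have m03 : Mmat K (L := L) α 0 3 = ((0) : L) := rfl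
  have m04 : Mmat K (L := L) α 0 4 = ((0) : L) := rfl
  have m05 : Mmat K (L := L) α 0 5 = ((0) : L) := rfl
  have m06 : Mmat K (L := L) α 0 6 = (((algebraMap K L α)⁻¹) : L) := rfl
  have m07 : Mmat K (L := L) α 0 7 = ((0) : L) := rfl
  have m08 : Mmat K (L := L) α 0 8 = ((0) : L) := rfl
  have m09 : Mmat K (L := L) α 0 9 = ((0) : L) := rfl
  have m10 : Mmat K (L := L) α 1 0 = ((0) : L) := rfl
  have m11 : Mmat K (L := L) α 1 1 = ((0) : L) := rfl
  have m12 : Mmat K (L := L) α 1 2 = ((0) : L) := rfl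
  have m13 : Mmat K (L := L) α 1 3 = ((0) : L) := rfl
  have m14 : Mmat K (L := L) α 1 4 = ((0) : L) := rfl
  have m15 : Mmat K (L := L) α 1 5 = ((0) : L) := rfl
  have m16 : Mmat K (L := L) α 1 6 = ((0) : L) := rfl
  have m17 : Mmat K (L := L) α 1 7 = (((algebraMap K L α)⁻¹) : L) := rfl
  have m18 : Mmat K (L := L) α 1 8 = ((0) : L) := rfl
  have m19 : Mmat K (L := L) α 1 9 = ((0) : L) := rfl
  have m20 : Mmat K (L := L) α 2 0 = ((0) : L) := rfl
  have m21 : Mmat K (L := L) α 2 1 = ((0) : L) := rfl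
  have m22 : Mmat K (L := L) α 2 2 = ((0) : L) := rfl
  have m23 : Mmat K (L := L) α 2 3 = ((1) : L) := rfl
  have m24 : Mmat K (L := L) α 2 4 = ((0) : L) := rfl
  have m25 : Mmat K (L := L) α 2 5 = ((0) : L) := rfl
  have m26 : Mmat K (L := L) α 2 6 = ((0) : L) := rfl
  have m27 : Mmat K (L := L) α 2 7 = ((0) : L) := rfl
  have m28 : Mmat K (L := L) α 2 8 = ((0) : L) := rfl
  have m29 : Mmat K (L := L) α 2 9 = ((0) : L) := rfl
  have m30 : Mmat K (L := L) α 3 0 = ((0) : L) := rfl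
  have m31 : Mmat K (L := L) α 3 1 = ((0) : L) := rfl
  have m32 : Mmat K (L := L) α 3 2 = ((0) : L) := rfl
  have m33 : Mmat K (L := L) α 3 3 = ((0) : L) := rfl
  have m34 : Mmat K (L := L) α 3 4 = ((0) : L) := rfl
  have m35 : Mmat K (L := L) α 3 5 = ((0) : L) := rfl
  have m36 : Mmat K (L := L) α 3 6 = ((0) : L) := rfl
  have m37 : Mmat K (L := L) α 3 7 = ((0) : L) := rfl
  have m38 : Mmat K (L := L) α 3 8 = (((algebraMap K L α)⁻¹) : L) := rfl
  have m39 : Mmat K (L := L) α 3 9 = ((0) : L) := rfl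
  have m40 : Mmat K (L := L) α 4 0 = ((0) : L) := rfl
  have m41 : Mmat K (L := L) α 4 1 = ((0) : L) := rfl
  have m42 : Mmat K (L := L) α 4 2 = ((0) : L) := rfl
  have m43 : Mmat K (L := L) α 4 3 = ((0) : L) := rfl
  have m44 : Mmat K (L := L) α 4 4 = ((1) : L) := rfl
  have m45 : Mmat K (L := L) α 4 5 = ((0) : L) := rfl
  have m46 : Mmat K (L := L) α 4 6 = ((0) : L) := rfl
  have m47 : Mmat K (L := L) α 4 7 = ((0) : L) := rfl
  have m48 : Mmat K (L := L) α 4 8 = ((0) : L) := rfl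
  have m49 : Mmat K (L := L) α 4 9 = ((0) : L) := rfl
  have m50 : Mmat K (L := L) α 5 0 = ((0) : L) := rfl
  have m51 : Mmat K (L := L) α 5 1 = (((algebraMap K L α)) : L) := rfl
  have m52 : Mmat K (L := L) α 5 2 = ((0) : L) := rfl
  have m53 : Mmat K (L := L) α 5 3 = ((0) : L) := rfl
  have m54 : Mmat K (L := L) α 5 4 = ((0) : L) := rfl
  have m55 : Mmat K (L := L) α 5 5 = ((0) : L) := rfl
  have m56 : Mmat K (L := L) α 5 6 = ((0) : L) := rfl
  have m57 : Mmat K (L := L) α 5 7 = ((0) : L) := rfl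
  have m58 : Mmat K (L := L) α 5 8 = ((0) : L) := rfl
  have m59 : Mmat K (L := L) α 5 9 = ((0) : L) := rfl
  have m60 : Mmat K (L := L) α 6 0 = ((0) : L) := rfl
  have m61 : Mmat K (L := L) α 6 1 = ((0) : L) := rfl
  have m62 : Mmat K (L := L) α 6 2 = ((0) : L) := rfl
  have m63 : Mmat K (L := L) α 6 3 = ((0) : L) := rfl
  have m64 : Mmat K (L := L) α 6 4 = ((0) : L) := rfl
  have m65 : Mmat K (L := L) α 6 5 = ((0) : L) := rfl
  have m66 : Mmat K (L := L) α 6 6 = ((0) : L) := rfl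
  have m67 : Mmat K (L := L) α 6 7 = ((0) : L) := rfl
  have m68 : Mmat K (L := L) α 6 8 = ((0) : L) := rfl
  have m69 : Mmat K (L := L) α 6 9 = (((algebraMap K L α)⁻¹) : L) := rfl
  have m70 : Mmat K (L := L) α 7 0 = ((0) : L) := rfl
  have m71 : Mmat K (L := L) α 7 1 = ((0) : L) := rfl
  have m72 : Mmat K (L := L) α 7 2 = ((0) : L) := rfl
  have m73 : Mmat K (L := L) α 7 3 = ((0) : L) := rfl
  have m74 : Mmat K (L := L) α 7 4 = ((0) : L) := rfl
  have m75 : Mmat K (L := L) α 7 5 = ((1) : L) := rfl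
  have m76 : Mmat K (L := L) α 7 6 = ((0) : L) := rfl
  have m77 : Mmat K (L := L) α 7 7 = ((0) : L) := rfl
  have m78 : Mmat K (L := L) α 7 8 = ((0) : L) := rfl
  have m79 : Mmat K (L := L) α 7 9 = ((0) : L) := rfl
  have m80 : Mmat K (L := L) α 8 0 = ((0) : L) := rfl
  have m81 : Mmat K (L := L) α 8 1 = ((0) : L) := rfl
  have m82 : Mmat K (L := L) α 8 2 = (((algebraMap K L α)) : L) := rfl
  have m83 : Mmat K (L := L) α 8 3 = ((0) : L) := rfl
  have m84 : Mmat K (L := L) α 8 4 = ((0) : L) := rfl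
  have m85 : Mmat K (L := L) α 8 5 = ((0) : L) := rfl
  have m86 : Mmat K (L := L) α 8 6 = ((0) : L) := rfl
  have m87 : Mmat K (L := L) α 8 7 = ((0) : L) := rfl
  have m88 : Mmat K (L := L) α 8 8 = ((0) : L) := rfl
  have m89 : Mmat K (L := L) α 8 9 = ((0) : L) := rfl
  have m90 : Mmat K (L := L) α 9 0 = (((algebraMap K L α)^2) : L) := rfl
  have m91 : Mmat K (L := L) α 9 1 = ((0) : L) := rfl
  have m92 : Mmat K (L := L) α 9 2 = ((0) : L) := rfl
  have m93 : Mmat K (L := L) α 9 3 = ((0) : L) := rfl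
  have m94 : Mmat K (L := L) α 9 4 = ((0) : L) := rfl
  have m95 : Mmat K (L := L) α 9 5 = ((0) : L) := rfl
  have m96 : Mmat K (L := L) α 9 6 = ((0) : L) := rfl
  have m97 : Mmat K (L := L) α 9 7 = ((0) : L) := rfl
  have m98 : Mmat K (L := L) α 9 8 = ((0) : L) := rfl
  have m99 : Mmat K (L := L) α 9 9 = ((0) : L) := rfl
  ext i j
  rw [Matrix.mul_apply, sum10]
  fin_cases i <;> fin_cases j <;>
  · simp only [fmk0,fmk1,fmk2,fmk3,fmk4,fmk5,fmk6,fmk7,fmk8,fmk9, p00,p01,p02,p03,p04,p05,p06,p07,p08,p09,p10,p11,p12,p13,p14,p15,p16,p17,p18,p19,p20,p21,p22,p23,p24,p25,p26,p27,p28,p29,p30,p31,p32,p33,p34,p35,p36,p37,p38,p39,p40,p41,p42,p43,p44,p45,p46,p47,p48,p49,p50,p51,p52,p53,p54,p55,p56,p57,p58,p59,p60,p61,p62,p63,p64,p65,p66,p67,p68,p69,p70,p71,p72,p73,p74,p75,p76,p77,p78,p79,p80,p81,p82,p83,p84,p85,p86,p87,p88,p89,p90,p91,p92,p93,p94,p9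5,p96,p97,p98,p99,m00,m01,m02,m03,m04,m05,m06,m07,m08,m09,m10,m11,m12,m13,m14,m15,m16,m17,m18,m19,m20,m21,m22,m23,m24,m25,m26,m27,m28,m29,m30,m31,m32,m33,m34,m35,m36,m37,m38,m39,m40,m41,m42,m43,m44,m45,m46,m47,m48,m49,m50,m51,m52,m53,m54,m55,m56,m57,m58,m59,m60,m61,m62,m63,m64,m65,m66,m67,m68,m69,m70,m71,m72,m73,m74,m75,m76,m77,m78,m79,m80,m81,m82,m83,m84,m85,m86,m87,m88,m89,m90,m91,m92,m93,m94,m95,m96,m97,m98,m99, Matrix.map_apply, _root_.map_mul, _root_.map_pow, map_zero, _root_.map_one,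
      AlgEquiv.commutes, ← hl₂, ← hl₃, hl₁, zero_mul, mul_zero, one_mul, add_zero, zero_add]
    all_goals try field_simp
    all_goals try ring

lemma d_ne_zero {K L : Type*} [Field K] [Field L] [Algebra K L] [IsGalois K L]
    (hdeg : Module.finrank K L = 3)
    (σ : L ≃ₐ[K] L) (hσ : ∀ τ : L ≃ₐ[K] L, τ ∈ Subgroup.zpowers σ)
    (l₁ l₂ l₃ : L) (hl₂ : l₂ = σ l₁) (hl₃ : l₃ = σ l₂) (hl₁ : σ l₃ = l₁)
    (b : Module.Basis (Fin 3) K L) (hb0 : b 0 = l₁) (hb1 : b 1 = l₂) (hb2 : b 2 = l₃) :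
    l₁ ^ 3 + l₂ ^ 3 + l₃ ^ 3 - 3 * l₁ * l₂ * l₃ ≠ 0 := by
  haveI : FiniteDimensional K L := Module.Finite.of_basis b
  have hcard : Nat.card (L ≃ₐ[K] L) = 3 := by
    rw [IsGalois.card_aut_eq_finrank, hdeg]
  have htop : (⊤ : Subgroup (L ≃ₐ[K] L)) = Subgroup.zpowers σ := by
    ext τ; simpa using hσ τ
  have horder : orderOf σ = 3 := by
    rw [← Nat.card_zpowers, ← htop, Subgroup.card_top, hcard]
  have h3 : σ ^ 3 = 1 := by rw [← horder]; exact pow_orderOf_eq_one σ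
  have hσne : σ ≠ 1 := by
    intro h
    rw [h, orderOf_one] at horder
    norm_num at horder
  have hσ2ne : σ * σ ≠ 1 := by
    intro h
    have hdvd : orderOf σ ∣ 2 := orderOf_dvd_iff_pow_eq_one.mpr (by rw [pow_two]; exact h)
    rw [horder] at hdvd
    norm_num at hdvd
  intro hd0
  set V : Matrix (Fin 3) (Fin 3) L := !![l₁,l₂,l₃; l₂,l₃,l₁; l₃,l₁,l₂] with hV
  have e00 : V 0 0 = l₁ := rfl
  have e01 : V 0 1 = l₂ := rfl
  have e02 : V 0 2 = l₃ := rfl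
  have e10 : V 1 0 = l₂ := rfl
  have e11 : V 1 1 = l₃ := rfl
  have e12 : V 1 2 = l₁ := rfl
  have e20 : V 2 0 = l₃ := rfl
  have e21 : V 2 1 = l₁ := rfl
  have e22 : V 2 2 = l₂ := rfl
  have hdetV : V.det = 0 := by
    rw [Matrix.det_fin_three, e00, e01, e02, e10, e11, e12, e20, e21, e22]
    linear_combination -hd0
  obtain ⟨v, hv0, hv⟩ := (Matrix.exists_vecMul_eq_zero_iff).mpr hdetV
  have h0 : v 0 * l₁ + v 1 * l₂ + v 2 * l₃ = 0 := by
    have := congrFun hv 0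
    simpa [Matrix.vecMul, dotProduct, Fin.sum_univ_three, e00, e10, e20] using this
  have h1 : v 0 * l₂ + v 1 * l₃ + v 2 * l₁ = 0 := by
    have := congrFun hv 1
    simpa [Matrix.vecMul, dotProduct, Fin.sum_univ_three, e01, e11, e21] using this
  have h2 : v 0 * l₃ + v 1 * l₁ + v 2 * l₂ = 0 := by
    have := congrFun hv 2
    simpa [Matrix.vecMul, dotProduct, Fin.sum_univ_three, e02, e12, e22] using this
  have hfun : ∀ x : L, v 0 * x + v 1 * σ x + v 2 * σ (σ x) = 0 := by
    intro x
    have hx := b.sum_repr x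
    rw [Fin.sum_univ_three] at hx
    rw [← hx, hb0, hb1, hb2]
    simp only [Algebra.smul_def, map_add, _root_.map_mul, AlgEquiv.commutes, ← hl₂, ← hl₃, hl₁]
    linear_combination (algebraMap K L (b.repr x 0)) * h0 + (algebraMap K L (b.repr x 1)) * h1 +
      (algebraMap K L (b.repr x 2)) * h2
  classical
  set f1 : L →* L := σ.toAlgHom.toRingHom.toMonoidHom with hf1
  have hf1x : ∀ x, f1 x = σ x := fun _ => rfl
  set F : Fin 3 → (L →* L) := ![MonoidHom.id L, f1, f1.comp f1] with hF
  have hF0 : ∀ x : L, F 0 x = x := fun _ => rfl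
  have hF1 : ∀ x : L, F 1 x = σ x := fun _ => rfl
  have hF2 : ∀ x : L, F 2 x = σ (σ x) := fun _ => rfl
  have hinj : Function.Injective F := by
    intro k m hkm
    have hpt : ∀ x : L, F k x = F m x := fun x => DFunLike.congr_fun hkm x
    fin_cases k <;> fin_cases m <;> first
      | rfl
      | (exfalso
         revert hpt
         simp only [hF0, hF1, hF2]
         intro hpt
         first
           | exact hσne (AlgEquiv.ext fun x => ((hpt x).symm))
           | exact hσne (AlgEquiv.ext fun x => ((hpt x)))
           | exact hσ2ne (AlgEquiv.ext fun x => (by rw [AlgEquiv.mul_apply]; exact (hpt x).symm))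
           | exact hσ2ne (AlgEquiv.ext fun x => (by rw [AlgEquiv.mul_apply]; exact (hpt x)))
           | exact hσne (AlgEquiv.ext fun x => (σ.injective (hpt x)).symm)
           | exact hσne (AlgEquiv.ext fun x => (σ.injective (hpt x))))
  have li : LinearIndependent L (fun k : Fin 3 => ⇑(F k)) :=
    (linearIndependent_monoidHom L L).comp F hinj
  have hsum : ∑ k : Fin 3, v k • ⇑(F k) = 0 := by
    funext x
    have : (∑ k : Fin 3, v k • ⇑(F k)) x = v 0 * F 0 x + v 1 * F 1 x + v 2 * F 2 x := by
      rw [Fin.sum_univ_three]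
      simp only [Pi.add_apply, Pi.smul_apply, smul_eq_mul]
    rw [this, hF0, hF1, hF2]
    exact hfun x
  have hvz := Fintype.linearIndependent_iff.mp li v hsum
  exact hv0 (funext fun k => hvz k)

/-- for a degree-3 Galois extension `L/K` with Galois group generated
by `σ`, with `l₂ = σ(l₁)`, `l₃ = σ(l₂)` (so `σ(l₃) = l₁`) and `α ∈ K×`, the matrix
`φ` satisfies `M_α · σ(φ) = φ`; moreover if `{l₁, l₂, l₃}` is a `K`-basis of `L`
then `φ` is invertible and `M_α = φ · (σ(φ))⁻¹`. -/
theorem stmt7 {K L : Type*} [Field K] [Field L] [Algebra K L] [IsGalois K L]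
    (hdeg : Module.finrank K L = 3)
    (σ : L ≃ₐ[K] L) (hσ : ∀ τ : L ≃ₐ[K] L, τ ∈ Subgroup.zpowers σ)
    (l₁ l₂ l₃ : L) (hl₂ : l₂ = σ l₁) (hl₃ : l₃ = σ l₂) (hl₁ : σ l₃ = l₁)
    (α : K) (hα : α ≠ 0) :
    Mmat K α * (phiMat K α l₁ l₂ l₃).map (fun t => σ t) = phiMat K α l₁ l₂ l₃ ∧
      ((∃ b : Module.Basis (Fin 3) K L, b 0 = l₁ ∧ b 1 = l₂ ∧ b 2 = l₃) →
        IsUnit (phiMat K α l₁ l₂ l₃) ∧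
          Mmat K α =
            phiMat K α l₁ l₂ l₃ * ((phiMat K α l₁ l₂ l₃).map (fun t => σ t))⁻¹) := by
  have ha : (algebraMap K L α) ≠ 0 := by
    simpa using (map_ne_zero (algebraMap K L)).mpr hα
  have part1 := part1_lemma σ l₁ l₂ l₃ hl₂ hl₃ hl₁ α ha
  refine ⟨part1, ?_⟩
  rintro ⟨b, hb0, hb1, hb2⟩
  have hd := d_ne_zero hdeg σ hσ l₁ l₂ l₃ hl₂ hl₃ hl₁ b hb0 hb1 hb2
  have hunit : IsUnit (phiMat K α l₁ l₂ l₃) := by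
    rw [Matrix.isUnit_iff_isUnit_det]
    exact IsUnit.of_mul_eq_one (psiMat K α l₁ l₂ l₃).det
      (by rw [← Matrix.det_mul, phi_mul_psi α l₁ l₂ l₃ ha hd, Matrix.det_one])
  refine ⟨hunit, ?_⟩
  have hmap : (phiMat K α l₁ l₂ l₃).map (fun t => σ t)
      = (RingHom.mapMatrix (σ : L →+* L)) (phiMat K α l₁ l₂ l₃) := rfl
  have hσunit : IsUnit ((phiMat K α l₁ l₂ l₃).map (fun t => σ t)) := by
    rw [hmap]; exact hunit.map _
  have hdet : IsUnit ((phiMat K α l₁ l₂ l₃).map (fun t => σ t)).det :=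
    (Matrix.isUnit_iff_isUnit_det _).1 hσunit
  calc Mmat K α
      = Mmat K α * (phiMat K α l₁ l₂ l₃).map (fun t => σ t) *
          ((phiMat K α l₁ l₂ l₃).map (fun t => σ t))⁻¹ :=
        (Matrix.mul_nonsing_inv_cancel_right _ _ hdet).symm
    _ = phiMat K α l₁ l₂ l₃ * ((phiMat K α l₁ l₂ l₃).map (fun t => σ t))⁻¹ := by
        rw [part1]
end

section
/- Let A, B, C ∈ ℤ and let P(t) = t³ + At² + Bt + C. Assume P is irreducible over ℚ and that its splitting field L over ℚ has degree 3 (so L/ℚ is Galois with cyclic Galois group of order 3). Let t₁ ∈ L be a root of P. Then there exist integers α, β, γ, δ such that γt₁ + δ ≠ 0, the element t₂ = (αt₁ + β)/(γt₁ + δ) is a root of P distinct from t₁, γt₂ + δ ≠ 0, and t₃ = (αt₂ + β)/(γt₂ + δ) is a root of P distinct from both t₁ and t₂. -/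
open Polynomial

private lemma moebius_aux {L : Type*} [Field L] [Algebra ℚ L] [FiniteDimensional ℚ L]
    (h3 : Module.finrank ℚ L = 3) {t : L}
    (ht : ∀ u v : ℚ, (algebraMap ℚ L u) * t + algebraMap ℚ L v = 0 → u = 0 ∧ v = 0)
    (x : L) :
    ∃ α β γ δ : ℤ, ((γ : L) * t + (δ : L) ≠ 0) ∧
      x = ((α : L) * t + (β : L)) / ((γ : L) * t + (δ : L)) := by
  have hnli : ¬ LinearIndependent ℚ ![(1 : L), t, x, x * t] := by
    intro h
    have := h.fintype_card_le_finrank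
    simp [h3] at this
  rw [Fintype.not_linearIndependent_iff] at hnli
  obtain ⟨g, hg, ⟨i, hi⟩⟩ := hnli
  rw [Fin.sum_univ_four] at hg
  simp only [Matrix.cons_val_zero, Matrix.cons_val_one, Matrix.head_cons,
    Matrix.cons_val_two, Matrix.tail_cons, Matrix.cons_val_three, smul_eq_mul,
    Algebra.smul_def, mul_one] at hg
  -- relation: a(g0) + a(g1) t + a(g2) x + a(g3) (x t) = 0
  set α' : ℚ := -(g 1) with hα'
  set β' : ℚ := -(g 0) with hβ'
  set γ' : ℚ := g 3 with hγ'
  set δ' : ℚ := g 2 with hδ'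
  have key : x * (algebraMap ℚ L γ' * t + algebraMap ℚ L δ')
      = algebraMap ℚ L α' * t + algebraMap ℚ L β' := by
    simp only [hα', hβ', map_neg]
    ring_nf
    ring_nf at hg
    linear_combination hg
  have hden : algebraMap ℚ L γ' * t + algebraMap ℚ L δ' ≠ 0 := by
    intro h0
    obtain ⟨hγ0, hδ0⟩ := ht γ' δ' h0
    have h1 : algebraMap ℚ L α' * t + algebraMap ℚ L β' = 0 := by
      rw [← key, h0, mul_zero]
    obtain ⟨hα0, hβ0⟩ := ht α' β' h1
    have e1 : g 1 = 0 := by rw [hα'] at hα0; linarith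
    have e0 : g 0 = 0 := by rw [hβ'] at hβ0; linarith
    apply hi
    fin_cases i
    · exact e0
    · exact e1
    · exact hδ0
    · exact hγ0
  have hx : x = (algebraMap ℚ L α' * t + algebraMap ℚ L β')
      / (algebraMap ℚ L γ' * t + algebraMap ℚ L δ') := by
    rw [eq_div_iff hden]
    exact key
  -- now clear denominators
  refine ⟨α'.num * (β'.den * γ'.den * δ'.den), β'.num * (α'.den * γ'.den * δ'.den),
    γ'.num * (α'.den * β'.den * δ'.den), δ'.num * (α'.den * β'.den * γ'.den), ?_, ?_⟩
  all_goals {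
  have hD : ((α'.den * β'.den * γ'.den * δ'.den : ℚ)) ≠ 0 := by positivity
  have c1 : ((α'.num * (β'.den * γ'.den * δ'.den) : ℤ) : L)
      = algebraMap ℚ L (α' * (α'.den * β'.den * γ'.den * δ'.den)) := by
    rw [← map_intCast (algebraMap ℚ L)]
    congr 1
    push_cast
    rw [show ((α'.num : ℚ)) = α' * α'.den from (Rat.mul_den_eq_num α').symm]
    ring
  have c2 : ((β'.num * (α'.den * γ'.den * δ'.den) : ℤ) : L)
      = algebraMap ℚ L (β' * (α'.den * β'.den * γ'.den * δ'.den)) := by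
    rw [← map_intCast (algebraMap ℚ L)]
    congr 1
    push_cast
    rw [show ((β'.num : ℚ)) = β' * β'.den from (Rat.mul_den_eq_num β').symm]
    ring
  have c3 : ((γ'.num * (α'.den * β'.den * δ'.den) : ℤ) : L)
      = algebraMap ℚ L (γ' * (α'.den * β'.den * γ'.den * δ'.den)) := by
    rw [← map_intCast (algebraMap ℚ L)]
    congr 1
    push_cast
    rw [show ((γ'.num : ℚ)) = γ' * γ'.den from (Rat.mul_den_eq_num γ').symm]
    ring
  have c4 : ((δ'.num * (α'.den * β'.den * γ'.den) : ℤ) : L)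
      = algebraMap ℚ L (δ' * (α'.den * β'.den * γ'.den * δ'.den)) := by
    rw [← map_intCast (algebraMap ℚ L)]
    congr 1
    push_cast
    rw [show ((δ'.num : ℚ)) = δ' * δ'.den from (Rat.mul_den_eq_num δ').symm]
    ring
  have hDL : algebraMap ℚ L (α'.den * β'.den * γ'.den * δ'.den : ℚ) ≠ 0 := by
    rw [ne_eq, _root_.map_eq_zero]
    exact hD
  have hnum : ((α'.num * (β'.den * γ'.den * δ'.den) : ℤ) : L) * t
      + ((β'.num * (α'.den * γ'.den * δ'.den) : ℤ) : L)
      = algebraMap ℚ L (α'.den * β'.den * γ'.den * δ'.den : ℚ)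
        * (algebraMap ℚ L α' * t + algebraMap ℚ L β') := by
    rw [c1, c2]; simp only [map_mul, map_neg, map_natCast]; ring
  have hden2 : ((γ'.num * (α'.den * β'.den * δ'.den) : ℤ) : L) * t
      + ((δ'.num * (α'.den * β'.den * γ'.den) : ℤ) : L)
      = algebraMap ℚ L (α'.den * β'.den * γ'.den * δ'.den : ℚ)
        * (algebraMap ℚ L γ' * t + algebraMap ℚ L δ') := by
    rw [c3, c4]; simp only [map_mul, map_neg, map_natCast]; ring
  first
  | (rw [hden2]; exact mul_ne_zero hDL hden)
  | (rw [hnum, hden2, mul_div_mul_left _ _ hDL]; exact hx) }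

/-- for an irreducible integral cubic `P = t³ + at² + bt + c` over `ℚ`
whose splitting field `L` has degree 3, and `t₁ ∈ L` a root of `P`, there are
integers `α, β, γ, δ` such that `t₂ = (αt₁+β)/(γt₁+δ)` and `t₃ = (αt₂+β)/(γt₂+δ)`
are the other two (distinct) roots of `P`. -/
theorem stmt8 (a b c : ℤ) (P : ℚ[X])
    (hP : P = X ^ 3 + C (a : ℚ) * X ^ 2 + C (b : ℚ) * X + C (c : ℚ))
    (hirr : Irreducible P)
    (hdeg : Module.finrank ℚ P.SplittingField = 3)
    (t₁ : P.SplittingField) (ht₁ : aeval t₁ P = 0) :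
    ∃ α β γ δ : ℤ, ∃ t₂ t₃ : P.SplittingField,
      (γ : P.SplittingField) * t₁ + (δ : P.SplittingField) ≠ 0 ∧
      t₂ = ((α : P.SplittingField) * t₁ + (β : P.SplittingField)) /
             ((γ : P.SplittingField) * t₁ + (δ : P.SplittingField)) ∧
      aeval t₂ P = 0 ∧ t₂ ≠ t₁ ∧
      (γ : P.SplittingField) * t₂ + (δ : P.SplittingField) ≠ 0 ∧
      t₃ = ((α : P.SplittingField) * t₂ + (β : P.SplittingField)) /
             ((γ : P.SplittingField) * t₂ + (δ : P.SplittingField)) ∧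
      aeval t₃ P = 0 ∧ t₃ ≠ t₁ ∧ t₃ ≠ t₂ := by
  haveI : IsGalois ℚ P.SplittingField := IsGalois.mk (to_normal := Polynomial.SplittingField.instNormal P)
  have hmon : P.Monic := by rw [hP]; monicity!
  have hnd : P.natDegree = 3 := by rw [hP]; compute_degree!
  have hmin : minpoly ℚ t₁ = P := (minpoly.eq_of_irreducible_of_monic hirr ht₁ hmon).symm
  -- t₁ is not "rational"
  have ht : ∀ u v : ℚ, (algebraMap ℚ P.SplittingField u) * t₁
      + algebraMap ℚ P.SplittingField v = 0 → u = 0 ∧ v = 0 := by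
    intro u v huv
    have hu : u = 0 := by
      by_contra hu
      have h1 : t₁ = algebraMap ℚ P.SplittingField (-v / u) := by
        have hu' : algebraMap ℚ P.SplittingField u ≠ 0 := by
          rw [ne_eq, _root_.map_eq_zero]; exact hu
        rw [map_div₀, map_neg, eq_div_iff hu']
        linear_combination huv
      have h2 := minpoly.eq_X_sub_C P.SplittingField (A := ℚ) (-v / u)
      rw [← h1, hmin] at h2
      have : P.natDegree = 1 := by rw [h2]; compute_degree!
      omega
    refine ⟨hu, ?_⟩
    rw [hu, map_zero, zero_mul, zero_add, _root_.map_eq_zero] at huv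
    exact huv
  -- Galois group of order 3
  have hcard : Fintype.card (P.SplittingField ≃ₐ[ℚ] P.SplittingField) = 3 := by
    rw [← Nat.card_eq_fintype_card, IsGalois.card_aut_eq_finrank, hdeg]
  obtain ⟨σ, hσ⟩ : ∃ σ : P.SplittingField ≃ₐ[ℚ] P.SplittingField, σ ≠ 1 :=
    Fintype.exists_ne_of_one_lt_card (by omega) 1
  -- t₁ generates, so any automorphism fixing it is trivial
  have hint : IsIntegral ℚ t₁ := IsIntegral.of_finite ℚ t₁
  have hadj : Algebra.adjoin ℚ ({t₁} : Set P.SplittingField) = ⊤ := by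
    have hfr : Module.finrank ℚ (IntermediateField.adjoin ℚ {t₁}) = 3 := by
      rw [IntermediateField.adjoin.finrank hint, hmin, hnd]
    have htop : IntermediateField.adjoin ℚ {t₁} = ⊤ := by
      have h1 : IntermediateField.adjoin ℚ {t₁} ≤ ⊤ := le_top
      have := IntermediateField.eq_of_le_of_finrank_eq h1 (by
        rw [hfr, IntermediateField.finrank_top', hdeg])
      exact this
    have := IntermediateField.adjoin_simple_toSubalgebra_of_isAlgebraic hint.isAlgebraic
    rw [htop] at this
    rw [← this, IntermediateField.top_toSubalgebra]
  have key : ∀ τ : P.SplittingField ≃ₐ[ℚ] P.SplittingField, τ t₁ = t₁ → τ = 1 := by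
    intro τ hτ
    ext x
    have hx : x ∈ Algebra.adjoin ℚ ({t₁} : Set P.SplittingField) := hadj ▸ Algebra.mem_top
    have hle : Algebra.adjoin ℚ ({t₁} : Set P.SplittingField)
        ≤ AlgHom.equalizer τ.toAlgHom (AlgHom.id ℚ P.SplittingField) := by
      rw [Algebra.adjoin_le_iff]
      intro y hy
      rw [Set.mem_singleton_iff] at hy
      subst hy
      exact hτ
    exact hle hx
  have hord : orderOf σ = 3 := by
    have h3 : σ ^ 3 = 1 := by rw [← hcard]; exact pow_card_eq_one
    exact orderOf_eq_prime h3 hσ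
  have hσ2 : σ * σ ≠ 1 := by
    intro h
    have : orderOf σ ∣ 2 := orderOf_dvd_of_pow_eq_one (by rw [pow_two]; exact h)
    rw [hord] at this
    omega
  -- roots
  have hroot : ∀ x : P.SplittingField, aeval x P = 0 → aeval (σ x) P = 0 := by
    intro x hx
    rw [show (σ x) = σ.toAlgHom x from rfl, Polynomial.aeval_algHom_apply, hx, map_zero]
  obtain ⟨α, β, γ, δ, hden1, heq1⟩ := moebius_aux hdeg ht (σ t₁)
  have hfix : ∀ k : ℤ, σ ((k : ℤ) : P.SplittingField) = ((k : ℤ) : P.SplittingField) :=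
    fun k => map_intCast σ k
  have hcomm : ∀ x : P.SplittingField,
      σ ((γ : P.SplittingField) * x + (δ : P.SplittingField))
        = (γ : P.SplittingField) * σ x + (δ : P.SplittingField) := by
    intro x
    rw [map_add, map_mul, hfix, hfix]
  refine ⟨α, β, γ, δ, σ t₁, σ (σ t₁), hden1, heq1, hroot t₁ ht₁,
    fun h => hσ (key σ h), ?_, ?_, hroot _ (hroot _ ht₁), ?_, ?_⟩
  · intro h0
    rw [← hcomm t₁] at h0
    exact hden1 (by apply σ.injective; rw [h0, map_zero])
  · conv_lhs => rw [heq1]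
    rw [map_div₀, map_add, map_mul, hfix, hfix, map_add, map_mul, hfix, hfix]
  · intro h
    apply hσ2
    exact key (σ * σ) h
  · intro h
    exact hσ (key σ (σ.injective h))
end

section
/- Let F be a field of characteristic 0, let B, C ∈ F, and let t₁, t₂, t₃ ∈ F be three distinct roots of t³ + Bt + C, i.e. t³ + Bt + C = (t − t₁)(t − t₂)(t − t₃). Suppose α, β, γ, δ ∈ F satisfy δ = −(α + 1), βγ = −(α² + α + 1), γ ≠ 0, and the Möbius relations γt₁t₂ + δt₂ − αt₁ − β = 0, γt₂t₃ + δt₃ − αt₂ − β = 0, γt₃t₁ + δt₁ − αt₃ − β = 0. Then B = 3β/γ and C = −β(2α + 1)/γ². -/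
/-- if `t³ + Bt + C = (t-t₁)(t-t₂)(t-t₃)` with `t₁, t₂, t₃` distinct,
and `α, β, γ, δ` satisfy `δ = -(α+1)`, `βγ = -(α²+α+1)`, `γ ≠ 0` and the Möbius
relations cyclically permuting the roots, then `B = 3β/γ` and `C = -β(2α+1)/γ²`. -/
theorem stmt10 {F : Type*} [Field F] [CharZero F] (B C t₁ t₂ t₃ : F)
    (hd₁₂ : t₁ ≠ t₂) (hd₂₃ : t₂ ≠ t₃) (hd₁₃ : t₁ ≠ t₃)
    (hroots : ∀ t : F, t ^ 3 + B * t + C = (t - t₁) * (t - t₂) * (t - t₃))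
    (α β γ δ : F)
    (hδ : δ = -(α + 1)) (hβγ : β * γ = -(α ^ 2 + α + 1)) (hγ : γ ≠ 0)
    (h₁ : γ * (t₁ * t₂) + δ * t₂ - α * t₁ - β = 0)
    (h₂ : γ * (t₂ * t₃) + δ * t₃ - α * t₂ - β = 0)
    (h₃ : γ * (t₃ * t₁) + δ * t₁ - α * t₃ - β = 0) :
    B = 3 * β / γ ∧ C = -(β * (2 * α + 1)) / γ ^ 2 := by
  have he1 : t₁ + t₂ + t₃ = 0 := by
    linear_combination (1/2) * hroots 1 + (1/2) * hroots (-1) - hroots 0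
  have he2 : B = t₁ * t₂ + t₂ * t₃ + t₁ * t₃ := by
    linear_combination (1/2) * hroots 1 - (1/2) * hroots (-1)
  have he3 : C = -(t₁ * t₂ * t₃) := by
    linear_combination hroots 0
  have hB : B * γ = 3 * β := by
    linear_combination h₁ + h₂ + h₃ + γ * he2 + (α - δ) * he1
  have hC : C * γ ^ 2 = -(β * (2 * α + 1)) := by
    linear_combination (-γ/3) * (t₃ * h₁ + t₁ * h₂ + t₂ * h₃) + γ ^ 2 * he3
      - ((δ - α) * γ / 3) * he2 + ((δ - α) / 3) * hB - (γ * β / 3) * he1 + β * hδ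
  exact ⟨(eq_div_iff hγ).mpr hB, (eq_div_iff (pow_ne_zero 2 hγ)).mpr hC⟩
end
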